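/- arXiv:0909.0931 — 13 statements merged into one kernel-verified Lean document; each statement's English description precedes it below -/
import Mathlib

section
/- Necessity of the perfect QEC (Knill–Laflamme) conditions: Suppose there exists a finite Kraus family {R_j}_{j∈J} of n×n complex matrices with ∑_j R_jᴴ R_j = 1 such that ∑_{j∈J} ∑_{i∈I} R_j E_i ρ E_iᴴ R_jᴴ = ρ for every n×n matrix ρ satisfying P ρ P = ρ. Then there exists a matrix of complex coefficients α : I × I → ℂ such that P E_iᴴ E_j P = α i j • P for all i, j ∈ I. -/
open Matrix

/-- Necessity of the perfect QEC (Knill–Laflamme) conditions: if there exists a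
trace-preserving recovery `{R_j}` that perfectly corrects the TP noise `{E_i}` on the
code subspace of the orthogonal projection `P`, then `P Eᵢᴴ Eⱼ P = α i j • P` for some
complex matrix `α`. -/
theorem perfect_QEC_conditions_necessary
    {n : ℕ} {I J : Type*} [Fintype I] [Fintype J]
    (E : I → Matrix (Fin n) (Fin n) ℂ) (R : J → Matrix (Fin n) (Fin n) ℂ)
    (P : Matrix (Fin n) (Fin n) ℂ)
    (hP1 : P * P = P) (hP2 : Pᴴ = P) (hP0 : P ≠ 0)
    (hTP : ∑ i, (E i)ᴴ * E i = 1)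
    (hRTP : ∑ j, (R j)ᴴ * R j = 1)
    (hrec : ∀ ρ : Matrix (Fin n) (Fin n) ℂ, P * ρ * P = ρ →
      ∑ j, ∑ i, R j * E i * ρ * (E i)ᴴ * (R j)ᴴ = ρ) :
    ∃ α : I → I → ℂ, ∀ i j, P * (E i)ᴴ * E j * P = α i j • P := by
  -- The combined Kraus operators, compressed to the code space
  set B : J × I → Matrix (Fin n) (Fin n) ℂ := fun k => R k.1 * E k.2 * P with hBdef
  -- The recovery condition rewritten for arbitrary X
  have hB : ∀ X : Matrix (Fin n) (Fin n) ℂ, ∑ k, B k * X * (B k)ᴴ = P * X * P := by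
    intro X
    have h := hrec (P * X * P) (by
      rw [← Matrix.mul_assoc, ← Matrix.mul_assoc, hP1, Matrix.mul_assoc, Matrix.mul_assoc,
        hP1, ← Matrix.mul_assoc])
    rw [← h, Fintype.sum_prod_type]
    apply Finset.sum_congr rfl
    intro k _
    apply Finset.sum_congr rfl
    intro m _
    simp only [hBdef, Matrix.conjTranspose_mul, hP2]
    noncomm_ring
  -- symmetry of entries from self-adjointness
  have hPsym : ∀ q b : Fin n, P b q = star (P q b) := by
    intro q b
    have := congrFun (congrFun hP2 b) q
    simpa [Matrix.conjTranspose_apply] using this.symm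
  -- Entrywise Gram identity
  have S : ∀ p a q b : Fin n, ∑ k, B k p a * star (B k q b) = P p a * star (P q b) := by
    intro p a q b
    have h := congrFun (congrFun (hB (Matrix.single a b 1)) p) q
    rw [← hPsym q b]
    simpa [Matrix.sum_apply, Matrix.mul_apply, Matrix.single,
      Matrix.conjTranspose_apply, Finset.sum_ite_eq, ite_and, Finset.mul_sum] using h
  -- a nonzero entry of P
  obtain ⟨p₀, a₀, h₀⟩ : ∃ p a, P p a ≠ 0 := by
    by_contra h
    push_neg at h
    exact hP0 (Matrix.ext fun p a => h p a)
  -- the scalars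
  set lam : J × I → ℂ := fun k => B k p₀ a₀ / P p₀ a₀ with hlam
  have hstar₀ : star (P p₀ a₀) ≠ 0 := star_ne_zero.mpr h₀
  -- each B k is a scalar multiple of P
  have key : ∀ k, B k = lam k • P := by
    intro k
    ext p a
    have hsum : ∑ m, (Complex.normSq (B m p a - lam m * P p a) : ℂ) = 0 := by
      have expand : ∀ m : J × I, (Complex.normSq (B m p a - lam m * P p a) : ℂ)
          = B m p a * star (B m p a)
            - (star (P p a) / star (P p₀ a₀)) * (B m p a * star (B m p₀ a₀))
            - (P p a / P p₀ a₀) * (B m p₀ a₀ * star (B m p a))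
            + (P p a * star (P p a) / (P p₀ a₀ * star (P p₀ a₀)))
              * (B m p₀ a₀ * star (B m p₀ a₀)) := by
        intro m
        rw [← Complex.mul_conj]
        simp only [hlam, map_sub, _root_.map_mul, map_div₀, Complex.star_def]
        field_simp [h₀, hstar₀]
        ring
      rw [Finset.sum_congr rfl (fun m _ => expand m)]
      simp only [Finset.sum_add_distrib, Finset.sum_sub_distrib, ← Finset.mul_sum]
      rw [S p a p a, S p a p₀ a₀, S p₀ a₀ p a, S p₀ a₀ p₀ a₀]
      field_simp [h₀, hstar₀]
      ring
    have hre : ∑ m, Complex.normSq (B m p a - lam m * P p a) = 0 := by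
      exact_mod_cast hsum
    have hm := (Finset.sum_eq_zero_iff_of_nonneg
      (fun m _ => Complex.normSq_nonneg _)).mp hre k (Finset.mem_univ k)
    have : B k p a - lam k * P p a = 0 := Complex.normSq_eq_zero.mp hm
    simpa [Matrix.smul_apply, sub_eq_zero] using this
  -- conclude
  refine ⟨fun i j => ∑ k : J, star (lam (k, i)) * lam (k, j), fun i j => ?_⟩
  have step1 : P * (E i)ᴴ * E j * P = ∑ k : J, (B (k, i))ᴴ * B (k, j) := by
    calc P * (E i)ᴴ * E j * P = P * (E i)ᴴ * (∑ k, (R k)ᴴ * R k) * E j * P := by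
          rw [hRTP]; noncomm_ring
      _ = ∑ k : J, (B (k, i))ᴴ * B (k, j) := by
          rw [Finset.mul_sum, Finset.sum_mul, Finset.sum_mul]
          apply Finset.sum_congr rfl
          intro k _
          simp only [hBdef, Matrix.conjTranspose_mul, hP2]
          noncomm_ring
  rw [step1]
  rw [Finset.sum_congr rfl (fun k _ => by rw [key (k, i), key (k, j)])]
  rw [Finset.sum_smul]
  apply Finset.sum_congr rfl
  intro k _
  rw [Matrix.conjTranspose_smul, hP2, smul_mul_assoc, mul_smul_comm, hP1, smul_smul]
end

section
/- Diagonalization of the perfect QEC conditions: Let {E_i}_{i∈Fin N} be a Kraus family of n×n complex matrices and P a nonzero orthogonal projection such that P E_iᴴ E_j P = α i j • P for some α : Fin N × Fin N → ℂ. Then the N×N matrix α is Hermitian and positive semidefinite, and there exist a unitary N×N complex matrix u and nonnegative reals d_k (the eigenvalues of α) such that the operators F_k := ∑_{i} (u i k) • E_i satisfy P F_kᴴ F_l P = (if k = l then d_k else 0) • P for all k, l. -/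
open Matrix
open scoped ComplexOrder

/-- Diagonalization of the perfect QEC conditions: if `P E_iᴴ E_j P = α i j • P`, then the
matrix `α` is Hermitian and positive semidefinite, and there exist a unitary `u` and
nonnegative reals `d_k` (the eigenvalues of `α`, i.e. `α = u D uᴴ` with `D = diagonal d`)
such that the rotated Kraus operators `F_k := ∑ i, u i k • E i` satisfy the QEC conditions
in diagonal form. -/
theorem perfect_QEC_conditions_diagonalization
    {n N : ℕ} (E : Fin N → Matrix (Fin n) (Fin n) ℂ)
    (P : Matrix (Fin n) (Fin n) ℂ) (α : Matrix (Fin N) (Fin N) ℂ)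
    (hP1 : P * P = P) (hP2 : Pᴴ = P) (hP0 : P ≠ 0)
    (hQEC : ∀ i j, P * (E i)ᴴ * E j * P = α i j • P) :
    α.IsHermitian ∧ α.PosSemidef ∧
    ∃ (u : Matrix (Fin N) (Fin N) ℂ) (d : Fin N → ℝ),
      u ∈ Matrix.unitaryGroup (Fin N) ℂ ∧
      (∀ k, 0 ≤ d k) ∧
      α = u * Matrix.diagonal (fun k => (d k : ℂ)) * uᴴ ∧
      (∀ k l, P * (∑ i, u i k • E i)ᴴ * (∑ i, u i l • E i) * P
        = (if k = l then (d k : ℂ) else 0) • P) := by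
  -- scalar injectivity from P ≠ 0
  have hinj : ∀ c c' : ℂ, c • P = c' • P → c = c' := by
    intro c c' h
    by_contra hne
    apply hP0
    have h2 : (c - c') • P = 0 := by rw [sub_smul, h, sub_self]
    rcases smul_eq_zero.mp h2 with h3 | h3
    · exact absurd (sub_eq_zero.mp h3) hne
    · exact h3
  -- key expansion lemma
  have key : ∀ v w : Fin N → ℂ,
      P * (∑ i, v i • E i)ᴴ * (∑ i, w i • E i) * P
        = (∑ i, ∑ j, star (v i) * w j * α i j) • P := by
    intro v w
    have expand : P * (∑ i, v i • E i)ᴴ * (∑ i, w i • E i) * P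
        = ∑ i, ∑ j, (star (v i) * w j) • (P * (E i)ᴴ * E j * P) := by
      rw [conjTranspose_sum]
      simp only [conjTranspose_smul, Matrix.mul_sum, Matrix.sum_mul, Matrix.mul_smul,
        Matrix.smul_mul, Finset.smul_sum, smul_smul]
      rw [Finset.sum_comm]
      exact Finset.sum_congr rfl fun i _ => Finset.sum_congr rfl fun j _ => by rw [mul_comm]
    rw [expand]
    simp only [hQEC, smul_smul, ← Finset.sum_smul]
  -- Hermitian
  have hH : α.IsHermitian := by
    ext i j
    apply hinj
    have := congrArg conjTranspose (hQEC j i)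
    simp only [conjTranspose_mul, conjTranspose_conjTranspose, conjTranspose_smul, hP2] at this
    rw [← mul_assoc, ← mul_assoc] at this
    rw [conjTranspose_apply, ← this, hQEC i j]
  -- trace of Mᴴ * M is a real sum of normSq
  have hnormtr : ∀ M : Matrix (Fin n) (Fin n) ℂ,
      (Mᴴ * M).trace = ((∑ j, ∑ i, Complex.normSq (M i j) : ℝ) : ℂ) := by
    intro M
    simp [Matrix.trace, Matrix.diag, Matrix.mul_apply, Matrix.conjTranspose_apply,
      Complex.normSq_eq_conj_mul_self]
  -- trace of P is a positive real
  obtain ⟨t, ht0, htP⟩ : ∃ t : ℝ, 0 < t ∧ P.trace = (t : ℂ) := by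
    refine ⟨∑ j, ∑ i, Complex.normSq (P i j), ?_, ?_⟩
    · have hne : (∑ j, ∑ i, Complex.normSq (P i j)) ≠ 0 := by
        intro h0
        apply hP0
        ext i j
        have := (Finset.sum_eq_zero_iff_of_nonneg (fun _ _ => Finset.sum_nonneg
          (fun _ _ => Complex.normSq_nonneg _))).mp h0 j (Finset.mem_univ j)
        have := (Finset.sum_eq_zero_iff_of_nonneg
          (fun _ _ => Complex.normSq_nonneg _)).mp this i (Finset.mem_univ i)
        simpa using Complex.normSq_eq_zero.mp this
      exact lt_of_le_of_ne (Finset.sum_nonneg fun _ _ => Finset.sum_nonneg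
        (fun _ _ => Complex.normSq_nonneg _)) (Ne.symm hne)
    · have h3 : Pᴴ * P = P := by rw [hP2, hP1]
      conv_lhs => rw [← h3]
      exact hnormtr P
  -- PSD
  have hPSD : α.PosSemidef := by
    refine Matrix.PosSemidef.of_dotProduct_mulVec_nonneg hH fun x => ?_
    set c : ℂ := ∑ i, ∑ j, star (x i) * x j * α i j with hc
    have hdot : star x ⬝ᵥ α *ᵥ x = c := by
      simp only [dotProduct, mulVec, Finset.mul_sum, hc, Pi.star_apply]
      exact Finset.sum_congr rfl fun i _ => Finset.sum_congr rfl fun j _ => by ring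
    rw [hdot]
    have hMeq : c • P = ((∑ i, x i • E i) * P)ᴴ * ((∑ i, x i • E i) * P) := by
      rw [conjTranspose_mul, hP2, ← key x x]
      noncomm_ring
    have htrace : c * t = ((∑ j, ∑ i, Complex.normSq (((∑ i, x i • E i) * P) i j) : ℝ) : ℂ) := by
      have := congrArg Matrix.trace hMeq
      rw [hnormtr] at this
      rw [Matrix.trace_smul, htP, smul_eq_mul] at this
      exact this
    have hs : 0 ≤ (∑ j, ∑ i, Complex.normSq (((∑ i, x i • E i) * P) i j)) :=
      Finset.sum_nonneg fun _ _ => Finset.sum_nonneg (fun _ _ => Complex.normSq_nonneg _)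
    have hcre : c = ((( ∑ j, ∑ i, Complex.normSq (((∑ i, x i • E i) * P) i j)) / t : ℝ) : ℂ) := by
      have htne : (t : ℂ) ≠ 0 := by
        exact_mod_cast ne_of_gt ht0
      rw [Complex.ofReal_div, eq_div_iff htne]
      exact htrace
    rw [hcre]
    rw [Complex.zero_le_real]
    positivity
  refine ⟨hH, hPSD, (hH.eigenvectorUnitary : Matrix (Fin N) (Fin N) ℂ), hH.eigenvalues,
    hH.eigenvectorUnitary.2, fun k => hPSD.eigenvalues_nonneg k, ?_, ?_⟩
  · have := hH.spectral_theorem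
    rw [Unitary.conjStarAlgAut_apply, Matrix.star_eq_conjTranspose] at this
    exact this
  · intro k l
    set u : Matrix (Fin N) (Fin N) ℂ := (hH.eigenvectorUnitary : Matrix (Fin N) (Fin N) ℂ) with hu
    rw [key (fun i => u i k) (fun i => u i l)]
    congr 1
    have huα : uᴴ * α * u = Matrix.diagonal (fun k => (hH.eigenvalues k : ℂ)) := by
      have hspec := hH.spectral_theorem
      rw [Unitary.conjStarAlgAut_apply, Matrix.star_eq_conjTranspose] at hspec
      have hu1 : uᴴ * u = 1 := by
        have := hH.eigenvectorUnitary.2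
        rw [Matrix.mem_unitaryGroup_iff'] at this
        exact this
      have h4 : uᴴ * α * u = uᴴ * (u * Matrix.diagonal (RCLike.ofReal ∘ hH.eigenvalues) * uᴴ) * u :=
        congrArg (fun M => uᴴ * M * u) hspec
      rw [h4]
      calc uᴴ * (u * Matrix.diagonal (RCLike.ofReal ∘ hH.eigenvalues) * uᴴ) * u
          = (uᴴ * u) * Matrix.diagonal (RCLike.ofReal ∘ hH.eigenvalues) * (uᴴ * u) := by
            noncomm_ring
        _ = Matrix.diagonal (fun k => (hH.eigenvalues k : ℂ)) := by
            rw [hu1, one_mul, mul_one]; rfl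
    have : (uᴴ * α * u) k l = ∑ i, ∑ j, star (u i k) * u j l * α i j := by
      simp only [Matrix.mul_apply, Matrix.conjTranspose_apply, Finset.sum_mul]
      rw [Finset.sum_comm]
      exact Finset.sum_congr rfl fun i _ => Finset.sum_congr rfl fun j _ => by ring
    rw [← this, huα, Matrix.diagonal_apply]
end

section
/- Orthogonality of the error subspaces: Let {F_k}_{k∈K} be a finite Kraus family, P a nonzero orthogonal projection, d_k > 0 reals with P F_kᴴ F_l P = (if k = l then d_k else 0) • P for all k, l, and U_k unitary matrices with F_k P = (√d_k) • (U_k P). Then P U_kᴴ U_l P = (if k = l then 1 else 0) • P for all k, l; consequently the matrices P_k := U_k P U_kᴴ are orthogonal projections (P_k² = P_k = P_kᴴ) satisfying P_k P_l = 0 whenever k ≠ l. -/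
open Matrix

/-- Orthogonality of the error subspaces: under the diagonal perfect QEC conditions with
polar decompositions `F_k P = √d_k • (U_k P)`, one has `P U_kᴴ U_l P = δ_{kl} • P`, and the
matrices `P_k := U_k P U_kᴴ` are mutually orthogonal projections. -/
theorem error_subspaces_orthogonal
    {n : ℕ} {K : Type*} [Fintype K] [DecidableEq K]
    (F : K → Matrix (Fin n) (Fin n) ℂ) (U : K → Matrix (Fin n) (Fin n) ℂ)
    (P : Matrix (Fin n) (Fin n) ℂ) (d : K → ℝ)
    (hP1 : P * P = P) (hP2 : Pᴴ = P) (hP0 : P ≠ 0)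
    (hd : ∀ k, 0 < d k)
    (hQEC : ∀ k l, P * (F k)ᴴ * F l * P = (if k = l then (d k : ℂ) else 0) • P)
    (hU : ∀ k, U k * (U k)ᴴ = 1 ∧ (U k)ᴴ * U k = 1)
    (hpolar : ∀ k, F k * P = (Real.sqrt (d k) : ℂ) • (U k * P)) :
    (∀ k l, P * (U k)ᴴ * U l * P = (if k = l then (1 : ℂ) else 0) • P) ∧
    (∀ k, (U k * P * (U k)ᴴ) * (U k * P * (U k)ᴴ) = U k * P * (U k)ᴴ) ∧
    (∀ k, (U k * P * (U k)ᴴ)ᴴ = U k * P * (U k)ᴴ) ∧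
    (∀ k l, k ≠ l → (U k * P * (U k)ᴴ) * (U l * P * (U l)ᴴ) = 0) := by
  have key : ∀ k l, P * (U k)ᴴ * U l * P = (if k = l then (1 : ℂ) else 0) • P := by
    intro k l
    have hs : ∀ m, (0:ℝ) < Real.sqrt (d m) := fun m => Real.sqrt_pos.mpr (hd m)
    have h1 : (F k * P)ᴴ * (F l * P) = (if k = l then (d k : ℂ) else 0) • P := by
      rw [conjTranspose_mul, hP2, ← hQEC k l]
      noncomm_ring
    have h2 : (F k * P)ᴴ * (F l * P)
        = ((Real.sqrt (d k) * Real.sqrt (d l) : ℝ) : ℂ) • (P * (U k)ᴴ * U l * P) := by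
      rw [hpolar k, hpolar l, conjTranspose_smul, smul_mul_assoc, mul_smul_comm,
        smul_smul, conjTranspose_mul, hP2]
      push_cast
      rw [Complex.star_def, Complex.conj_ofReal]; noncomm_ring
    have h3 : ((Real.sqrt (d k) * Real.sqrt (d l) : ℝ) : ℂ) • (P * (U k)ᴴ * U l * P)
        = (if k = l then (d k : ℂ) else 0) • P := by rw [← h2, h1]
    have hne : ((Real.sqrt (d k) * Real.sqrt (d l) : ℝ) : ℂ) ≠ 0 := by
      exact_mod_cast Complex.ofReal_ne_zero.mpr (mul_pos (hs k) (hs l)).ne'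
    by_cases hkl : k = l
    · subst hkl
      simp only [if_true, eq_self_iff_true] at h3 ⊢
      have hdk : ((Real.sqrt (d k) * Real.sqrt (d k) : ℝ) : ℂ) = (d k : ℂ) := by
        rw [Real.mul_self_sqrt (hd k).le]
      rw [hdk] at h3
      have := smul_right_injective (Matrix (Fin n) (Fin n) ℂ)
        (by exact_mod_cast (hd k).ne' : (d k : ℂ) ≠ 0) h3
      simp [this]
    · simp only [if_neg hkl] at h3 ⊢
      rw [zero_smul] at h3 ⊢
      exact (smul_eq_zero.mp h3).resolve_left hne
  refine ⟨key, ?_, ?_, ?_⟩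
  · intro k
    have h := key k k
    simp only [if_true, eq_self_iff_true, one_smul] at h
    calc (U k * P * (U k)ᴴ) * (U k * P * (U k)ᴴ)
        = U k * (P * (U k)ᴴ * U k * P) * (U k)ᴴ := by noncomm_ring
      _ = U k * P * (U k)ᴴ := by rw [h]
  · intro k
    simp [conjTranspose_mul, hP2, Matrix.mul_assoc]
  · intro k l hkl
    have h := key k l
    simp only [if_neg hkl, zero_smul] at h
    calc (U k * P * (U k)ᴴ) * (U l * P * (U l)ᴴ)
        = U k * (P * (U k)ᴴ * U l * P) * (U l)ᴴ := by noncomm_ring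
      _ = 0 := by rw [h]; simp
end

section
/- The transpose channel equals the standard recovery for perfect QEC codes (Lemma 2): Under the diagonal perfect QEC conditions (P F_kᴴ F_l P = (if k = l then d_k else 0) • P with d_k > 0, and F_k P = (√d_k) • (U_k P) with U_k unitary), set P_k := U_k P U_kᴴ and S := ∑_{k∈K} (d_k)^{-1/2} • P_k (which is E(P)^{-1/2} on the support of E(P) := ∑_k F_k P F_kᴴ). Then for every k ∈ K, the Kraus operator of the transpose channel satisfies P F_kᴴ S = P U_kᴴ, i.e., it coincides with the corresponding Kraus operator of the standard perfect-QEC recovery map. -/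
open Matrix

/-- The transpose channel equals the standard recovery for perfect QEC codes (Lemma 2):
under the diagonal perfect QEC conditions, with `P_k := U_k P U_kᴴ` and
`S := ∑_k (d_k)^{-1/2} • P_k` (which is `E(P)^{-1/2}` on the support of `E(P)`),
the Kraus operators of the transpose channel satisfy `P F_kᴴ S = P U_kᴴ`. -/
theorem transpose_channel_eq_perfect_recovery
    {n : ℕ} {K : Type*} [Fintype K] [DecidableEq K]
    (F : K → Matrix (Fin n) (Fin n) ℂ) (U : K → Matrix (Fin n) (Fin n) ℂ)
    (P : Matrix (Fin n) (Fin n) ℂ) (d : K → ℝ)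
    (hP1 : P * P = P) (hP2 : Pᴴ = P) (hP0 : P ≠ 0)
    (hd : ∀ k, 0 < d k)
    (hQEC : ∀ k l, P * (F k)ᴴ * F l * P = (if k = l then (d k : ℂ) else 0) • P)
    (hU : ∀ k, U k * (U k)ᴴ = 1 ∧ (U k)ᴴ * U k = 1)
    (hpolar : ∀ k, F k * P = (Real.sqrt (d k) : ℂ) • (U k * P)) :
    ∀ k, P * (F k)ᴴ *
        (∑ l, (((Real.sqrt (d l))⁻¹ : ℝ) : ℂ) • (U l * P * (U l)ᴴ))
      = P * (U k)ᴴ := by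
  intro k
  have key : ∀ l, P * (F k)ᴴ * ((((Real.sqrt (d l))⁻¹ : ℝ) : ℂ) • (U l * P * (U l)ᴴ))
      = (if k = l then (1:ℂ) else 0) • (P * (U l)ᴴ) := by
    intro l
    have hdl : (0:ℝ) < Real.sqrt (d l) := Real.sqrt_pos.mpr (hd l)
    have hne : ((Real.sqrt (d l) : ℝ) : ℂ) ≠ 0 := by exact_mod_cast hdl.ne'
    have hUlP : U l * P = (((Real.sqrt (d l))⁻¹ : ℝ) : ℂ) • (F l * P) := by
      rw [hpolar l, smul_smul]
      push_cast
      rw [inv_mul_cancel₀ hne, one_smul]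
    have h1 : U l * P * (U l)ᴴ = (((Real.sqrt (d l))⁻¹ : ℝ) : ℂ) • (F l * P * (U l)ᴴ) := by
      rw [hUlP, smul_mul_assoc]
    rw [h1, smul_smul, mul_smul_comm]
    have h2 : P * (F k)ᴴ * (F l * P * (U l)ᴴ) = ((if k = l then (d k : ℂ) else 0) • P) * (U l)ᴴ := by
      rw [← hQEC k l]
      noncomm_ring
    rw [h2, smul_mul_assoc, smul_smul]
    by_cases hkl : k = l
    · subst hkl
      simp only [if_pos rfl]
      congr 1
      push_cast
      have hsq : ((Real.sqrt (d k) : ℝ) : ℂ) * ((Real.sqrt (d k) : ℝ) : ℂ) = (d k : ℂ) := by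
        norm_cast
        exact Real.mul_self_sqrt (hd k).le
      field_simp
      exact hsq.symm.trans (sq _).symm
    · simp [hkl]
  rw [Finset.mul_sum]
  simp only [key]
  simp
end

section
/- Near-optimality of the transpose channel (Theorem 3): Let {E_i}_{i∈I} be a TP Kraus family on ℂⁿ, P an orthogonal projection of rank d ≥ 1, T the positive semidefinite square root of E(P) := ∑_i E_i P E_iᴴ, and S the Moore–Penrose pseudoinverse of T. Let {R_j}_{j∈J} be a finite Kraus family with ∑_j R_jᴴ R_j = 1 and R_j = P R_j for all j, and let η ∈ [0,1] be such that ⟨ψ, (∑_{j,i} R_j E_i (ψψᴴ) E_iᴴ R_jᴴ) ψ⟩ ≥ 1 − η for every unit vector ψ with P ψ = ψ. Then for every unit vector ψ with P ψ = ψ: (⟨ψ, (∑_{j,i} R_j E_i (ψψᴴ) E_iᴴ R_jᴴ) ψ⟩)² ≤ (1 + (d−1)·η) · ∑_{i,j∈I} |⟨ψ, E_iᴴ S E_j ψ⟩|². -/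
set_option maxHeartbeats 1000000
open Matrix
open scoped ComplexOrder
namespace TCAux
variable {n : ℕ}




lemma mul_vecMulVec (M : Matrix (Fin n) (Fin n) ℂ) (x y : Fin n → ℂ) :
    M * vecMulVec x y = vecMulVec (M *ᵥ x) y := by
  ext a b
  simp only [mul_apply, vecMulVec_apply, mulVec, dotProduct, Finset.sum_mul]
  exact Finset.sum_congr rfl fun c _ => (mul_assoc _ _ _).symm

lemma vecMulVec_mul (M : Matrix (Fin n) (Fin n) ℂ) (x y : Fin n → ℂ) :
    vecMulVec x y * M = vecMulVec x (y ᵥ* M) := by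
  ext a b
  simp only [mul_apply, vecMulVec_apply, vecMul, dotProduct, Finset.mul_sum]
  exact Finset.sum_congr rfl fun c _ => (mul_assoc _ _ _)

lemma vecMulVec_mul_vecMulVec (x y z w : Fin n → ℂ) :
    vecMulVec x y * vecMulVec z w = (y ⬝ᵥ z) • vecMulVec x w := by
  ext a b
  simp only [mul_apply, vecMulVec_apply, dotProduct, Matrix.smul_apply, smul_eq_mul, Finset.sum_mul]
  exact Finset.sum_congr rfl fun c _ => by ring

lemma trace_mul_vecMulVec (M : Matrix (Fin n) (Fin n) ℂ) (x y : Fin n → ℂ) :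
    trace (M * vecMulVec x y) = y ⬝ᵥ (M *ᵥ x) := by
  simp only [trace, diag_apply, mul_apply, vecMulVec_apply, dotProduct, mulVec, Finset.mul_sum]
  exact Finset.sum_congr rfl fun a _ => Finset.sum_congr rfl fun c _ => by ring

lemma trace_vecMulVec (x y : Fin n → ℂ) :
    trace (vecMulVec x y) = y ⬝ᵥ x := by
  simpa using trace_mul_vecMulVec 1 x y

lemma star_dot (M : Matrix (Fin n) (Fin n) ℂ) (x y : Fin n → ℂ) :
    (starRingEnd ℂ) (star x ⬝ᵥ (M *ᵥ y)) = star y ⬝ᵥ (Mᴴ *ᵥ x) := by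
  simp only [dotProduct, mulVec, Pi.star_apply, conjTranspose_apply, map_sum, _root_.map_mul,
    Finset.mul_sum, RingHomCompTriple.comp_apply, RingHom.id_apply, starRingEnd_self_apply]
  rw [Finset.sum_comm]
  exact Finset.sum_congr rfl fun a _ => Finset.sum_congr rfl fun b _ => by
    simp only [Complex.star_def, Complex.conj_conj]; ring





lemma trace_ctm_re (X : Matrix (Fin n) (Fin n) ℂ) :
    (trace (Xᴴ * X)).re = ∑ j, ∑ i, Complex.normSq (X i j) := by
  simp only [trace, diag_apply, mul_apply, conjTranspose_apply, Complex.star_def]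
  rw [Complex.re_sum]
  refine Finset.sum_congr rfl fun j _ => ?_
  rw [Complex.re_sum]
  refine Finset.sum_congr rfl fun i _ => ?_
  rw [← Complex.normSq_eq_conj_mul_self, Complex.ofReal_re]

lemma trace_ctm_re_nonneg (X : Matrix (Fin n) (Fin n) ℂ) :
    0 ≤ (trace (Xᴴ * X)).re := by
  rw [trace_ctm_re]
  exact Finset.sum_nonneg fun j _ => Finset.sum_nonneg fun i _ => Complex.normSq_nonneg _

lemma eq_zero_of_trace_ctm (X : Matrix (Fin n) (Fin n) ℂ)
    (h : (trace (Xᴴ * X)).re = 0) : X = 0 := by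
  rw [trace_ctm_re] at h
  ext i j
  have h1 : ∀ j ∈ Finset.univ, (0:ℝ) ≤ ∑ i, Complex.normSq (X i j) :=
    fun j _ => Finset.sum_nonneg fun i _ => Complex.normSq_nonneg _
  have h2 := (Finset.sum_eq_zero_iff_of_nonneg h1).mp h j (Finset.mem_univ j)
  have h3 : ∀ i ∈ Finset.univ, (0:ℝ) ≤ Complex.normSq (X i j) :=
    fun i _ => Complex.normSq_nonneg _
  have h4 := (Finset.sum_eq_zero_iff_of_nonneg h3).mp h2 i (Finset.mem_univ i)
  simpa using Complex.normSq_eq_zero.mp h4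

lemma trace_psd_mul_psd_re_nonneg {A B : Matrix (Fin n) (Fin n) ℂ}
    (hA : A.PosSemidef) (hB : B.PosSemidef) : 0 ≤ (trace (A * B)).re := by
  obtain ⟨C, hC⟩ : ∃ C : Matrix (Fin n) (Fin n) ℂ, A = Cᴴ * C := by
    open scoped MatrixOrder Matrix.Norms.L2Operator in
    exact CStarAlgebra.nonneg_iff_eq_star_mul_self.mp hA.nonneg
  obtain ⟨D, hD⟩ : ∃ D : Matrix (Fin n) (Fin n) ℂ, B = Dᴴ * D := by
    open scoped MatrixOrder Matrix.Norms.L2Operator in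
    exact CStarAlgebra.nonneg_iff_eq_star_mul_self.mp hB.nonneg
  have : trace (A * B) = trace ((C * Dᴴ)ᴴ * (C * Dᴴ)) := by
    rw [hC, hD]
    calc trace (Cᴴ * C * (Dᴴ * D)) = trace (Cᴴ * C * Dᴴ * D) := by
            rw [Matrix.mul_assoc (Cᴴ * C) Dᴴ D]
      _ = trace (D * (Cᴴ * C * Dᴴ)) := trace_mul_comm _ _
      _ = trace ((C * Dᴴ)ᴴ * (C * Dᴴ)) := by
            simp only [conjTranspose_mul, conjTranspose_conjTranspose, Matrix.mul_assoc]
  rw [this]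
  exact trace_ctm_re_nonneg _

lemma posSemidef_sum {ι : Type*} [Fintype ι] (f : ι → Matrix (Fin n) (Fin n) ℂ)
    (h : ∀ i, (f i).PosSemidef) : (∑ i, f i).PosSemidef :=
  Finset.sum_induction f Matrix.PosSemidef (fun _ _ ha hb => ha.add hb)
    Matrix.PosSemidef.zero (fun i _ => h i)

lemma vecMulVec_mulVec (x y z : Fin n → ℂ) :
    vecMulVec x y *ᵥ z = (y ⬝ᵥ z) • x := by
  ext a
  simp only [mulVec, dotProduct, vecMulVec_apply, Pi.smul_apply, smul_eq_mul]
  rw [Finset.sum_mul]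
  exact Finset.sum_congr rfl fun c _ => by ring

lemma posSemidef_vecMulVec_star (v : Fin n → ℂ) :
    (vecMulVec v (star v)).PosSemidef := by
  exact posSemidef_vecMulVec_self_star v

lemma posSemidef_of_proj {Q : Matrix (Fin n) (Fin n) ℂ}
    (hH : Qᴴ = Q) (hQ : Q * Q = Q) : Q.PosSemidef := by
  have h : Q = Qᴴ * Q := by rw [hH, hQ]
  rw [h]
  exact posSemidef_conjTranspose_mul_self Q





lemma cs_of_quadratic {a b c : ℝ} (h : ∀ t : ℝ, 0 ≤ a * t ^ 2 + 2 * b * t + c) :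
    b ^ 2 ≤ a * c := by
  have hd := discrim_le_zero (a := a) (b := 2 * b) (c := c) (fun x => by
    have := h x; nlinarith [h x])
  rw [discrim] at hd
  nlinarith [hd]

lemma trace_channel {ι : Type*} [Fintype ι] (C : ι → Matrix (Fin n) (Fin n) ℂ)
    (h : ∑ i, (C i)ᴴ * C i = 1) (Y : Matrix (Fin n) (Fin n) ℂ) :
    trace (∑ i, C i * Y * (C i)ᴴ) = trace Y := by
  rw [trace_sum]
  have : ∀ i, trace (C i * Y * (C i)ᴴ) = trace (Y * ((C i)ᴴ * C i)) := by
    intro i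
    rw [trace_mul_comm (C i * Y) ((C i)ᴴ), ← Matrix.mul_assoc, trace_mul_comm]
  simp_rw [this]
  rw [← trace_sum]
  have : ∑ i, Y * ((C i)ᴴ * C i) = Y * ∑ i, ((C i)ᴴ * C i) := by
    rw [Finset.mul_sum]
  rw [this, h, Matrix.mul_one]

lemma quad_re_nonneg {T M : Matrix (Fin n) (Fin n) ℂ}
    (hT : T.PosSemidef) (hM : Mᴴ = M) : 0 ≤ (trace (M * T * M * T)).re := by
  obtain ⟨B, hB⟩ : ∃ B : Matrix (Fin n) (Fin n) ℂ, T = Bᴴ * B := by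
    open scoped MatrixOrder Matrix.Norms.L2Operator in
    exact CStarAlgebra.nonneg_iff_eq_star_mul_self.mp hT.nonneg
  have key : trace (M * T * M * T) = trace ((B * M * Bᴴ)ᴴ * (B * M * Bᴴ)) := by
    have e1 : (B * M * Bᴴ)ᴴ = B * M * Bᴴ := by
      simp only [conjTranspose_mul, conjTranspose_conjTranspose, hM, Matrix.mul_assoc]
    rw [e1, hB]
    -- goal : trace (M * (Bᴴ * B) * M * (Bᴴ * B)) = trace (B * M * Bᴴ * (B * M * Bᴴ))
    calc trace (M * (Bᴴ * B) * M * (Bᴴ * B))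
        = trace ((M * (Bᴴ * B) * M * Bᴴ) * B) := by rw [Matrix.mul_assoc (M * (Bᴴ * B) * M) Bᴴ B]
      _ = trace (B * (M * (Bᴴ * B) * M * Bᴴ)) := trace_mul_comm _ _
      _ = trace (B * M * Bᴴ * (B * M * Bᴴ)) := by
          simp only [Matrix.mul_assoc]
  rw [key]
  exact TCAux.trace_ctm_re_nonneg _




lemma unit_eigen (Q : Matrix (Fin n) (Fin n) ℂ) (hH : Q.IsHermitian) (k : Fin n) :
    star ⇑(hH.eigenvectorBasis k) ⬝ᵥ ⇑(hH.eigenvectorBasis k) = 1 := by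
  have h := orthonormal_iff_ite.mp hH.eigenvectorBasis.orthonormal k k
  rw [EuclideanSpace.inner_eq_star_dotProduct] at h
  rw [dotProduct_comm]
  simpa using h

lemma eigen01 (Q : Matrix (Fin n) (Fin n) ℂ) (hH : Q.IsHermitian) (hQ : Q * Q = Q)
    (k : Fin n) : hH.eigenvalues k = 0 ∨ hH.eigenvalues k = 1 := by
  set v : Fin n → ℂ := ⇑(hH.eigenvectorBasis k) with hv
  set lam : ℝ := hH.eigenvalues k with hlam
  have he : Q *ᵥ v = lam • v := hH.mulVec_eigenvectorBasis k
  have h2 : Q *ᵥ (Q *ᵥ v) = Q *ᵥ v := by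
    rw [mulVec_mulVec, hQ]
  rw [he, mulVec_smul, he, smul_smul] at h2
  have hvne : v ≠ 0 := by
    intro h0
    have := unit_eigen Q hH k
    rw [← hv, h0] at this
    simp at this
  obtain ⟨a, ha⟩ := Function.ne_iff.mp hvne
  have h3 : (lam * lam) • v a = lam • v a := congrFun h2 a
  have ha' : v a ≠ 0 := by simpa using ha
  have h4 : ((lam * lam : ℝ) : ℂ) * v a = (lam : ℂ) * v a := by
    simpa [Complex.real_smul] using h3
  have h5 : ((lam * lam : ℝ) : ℂ) = (lam : ℂ) := mul_right_cancel₀ ha' h4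
  have h6 : lam * lam = lam := by exact_mod_cast h5
  have h7 : lam * (lam - 1) = 0 := by nlinarith
  rcases mul_eq_zero.mp h7 with h | h
  · left; exact h
  · right; linarith

lemma proj_decomp (Q : Matrix (Fin n) (Fin n) ℂ) (hH : Q.IsHermitian) (hQ : Q * Q = Q) :
    ∃ (c : Fin n → ℝ) (v : Fin n → (Fin n → ℂ)),
      Q = ∑ k, (c k : ℂ) • vecMulVec (v k) (star (v k)) ∧
      (∀ k, c k = 0 ∨ c k = 1) ∧
      (∀ k, star (v k) ⬝ᵥ v k = 1) ∧
      (∀ k, c k = 1 → Q *ᵥ v k = v k) := by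
  classical
  refine ⟨hH.eigenvalues, fun k => ⇑(hH.eigenvectorBasis k), ?_, eigen01 Q hH hQ,
    unit_eigen Q hH, ?_⟩
  · have hcomp : ∑ k, vecMulVec ⇑(hH.eigenvectorBasis k) (star ⇑(hH.eigenvectorBasis k))
        = (1 : Matrix (Fin n) (Fin n) ℂ) := by
      have hU := (Matrix.mem_unitaryGroup_iff.mp (hH.eigenvectorUnitary).2)
      ext a b
      have := congrArg (fun M => M a b) hU
      simp only [mul_apply, star_apply, one_apply] at this ⊢
      rw [← this]
      simp only [Matrix.sum_apply, vecMulVec_apply, Pi.star_apply,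
        IsHermitian.eigenvectorUnitary_apply]
    calc Q = Q * 1 := (Matrix.mul_one Q).symm
      _ = ∑ k, Q * vecMulVec ⇑(hH.eigenvectorBasis k) (star ⇑(hH.eigenvectorBasis k)) := by
          rw [← hcomp, Finset.mul_sum]
      _ = ∑ k, ((hH.eigenvalues k : ℂ)) •
            vecMulVec ⇑(hH.eigenvectorBasis k) (star ⇑(hH.eigenvectorBasis k)) := by
          refine Finset.sum_congr rfl fun k _ => ?_
          rw [mul_vecMulVec, hH.mulVec_eigenvectorBasis k]
          ext a b
          simp only [vecMulVec_apply, Pi.smul_apply, Matrix.smul_apply, Complex.real_smul,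
            smul_eq_mul]
          ring
  · intro k hk
    have := hH.mulVec_eigenvectorBasis k
    rw [hk] at this
    simpa using this

lemma proj_trace_eq_rank (Q : Matrix (Fin n) (Fin n) ℂ) (hH : Q.IsHermitian)
    (hQ : Q * Q = Q) : trace Q = (Q.rank : ℂ) := by
  classical
  have hspec := hH.spectral_theorem
  have htr : trace Q = ∑ k, (hH.eigenvalues k : ℂ) := by
    exact hH.trace_eq_sum_eigenvalues
  rw [htr, hH.rank_eq_card_non_zero_eigs]
  have h1 : ∀ k, (hH.eigenvalues k : ℂ) = if hH.eigenvalues k ≠ 0 then 1 else 0 := by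
    intro k
    rcases eigen01 Q hH hQ k with h | h <;> simp [h]
  simp_rw [h1]
  rw [Finset.sum_boole, Fintype.card_subtype]


end TCAux

namespace TCAux
variable {n : ℕ} {I J : Type*} [Fintype I] [Fintype J]

lemma chan_regroup (E : I → Matrix (Fin n) (Fin n) ℂ) (R : J → Matrix (Fin n) (Fin n) ℂ)
    (X : Matrix (Fin n) (Fin n) ℂ) :
    (∑ j, ∑ i, R j * E i * X * (E i)ᴴ * (R j)ᴴ)
      = ∑ j, R j * (∑ i, E i * X * (E i)ᴴ) * (R j)ᴴ := by
  refine Finset.sum_congr rfl fun j _ => ?_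
  rw [Finset.mul_sum, Finset.sum_mul]
  refine Finset.sum_congr rfl fun i _ => ?_
  simp only [Matrix.mul_assoc]

lemma chan_trace (E : I → Matrix (Fin n) (Fin n) ℂ) (R : J → Matrix (Fin n) (Fin n) ℂ)
    (hTP : ∑ i, (E i)ᴴ * E i = 1) (hRTP : ∑ j, (R j)ᴴ * R j = 1)
    (X : Matrix (Fin n) (Fin n) ℂ) :
    trace (∑ j, ∑ i, R j * E i * X * (E i)ᴴ * (R j)ᴴ) = trace X := by
  rw [chan_regroup, TCAux.trace_channel R hRTP, TCAux.trace_channel E hTP]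

lemma chan_psd (E : I → Matrix (Fin n) (Fin n) ℂ) (R : J → Matrix (Fin n) (Fin n) ℂ)
    (X : Matrix (Fin n) (Fin n) ℂ) (hX : X.PosSemidef) :
    (∑ j, ∑ i, R j * E i * X * (E i)ᴴ * (R j)ᴴ).PosSemidef := by
  refine TCAux.posSemidef_sum _ fun j => TCAux.posSemidef_sum _ fun i => ?_
  simpa only [Matrix.mul_assoc, conjTranspose_mul] using
    hX.mul_mul_conjTranspose_same (R j * E i)

lemma chan_key (E : I → Matrix (Fin n) (Fin n) ℂ) (R : J → Matrix (Fin n) (Fin n) ℂ)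
    (ρ X : Matrix (Fin n) (Fin n) ℂ) :
    trace ((∑ j, (R j)ᴴ * ρ * R j) * (∑ i, E i * X * (E i)ᴴ))
      = trace ((∑ j, ∑ i, R j * E i * X * (E i)ᴴ * (R j)ᴴ) * ρ) := by
  rw [chan_regroup, Finset.sum_mul, trace_sum, Finset.sum_mul, trace_sum]
  refine Finset.sum_congr rfl fun j _ => ?_
  rw [Matrix.mul_assoc ((R j)ᴴ * ρ) (R j), trace_mul_comm, ← Matrix.mul_assoc]

lemma per_vector (E : I → Matrix (Fin n) (Fin n) ℂ) (R : J → Matrix (Fin n) (Fin n) ℂ)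
    (ψ v : Fin n → ℂ) (η : ℝ)
    (hTP : ∑ i, (E i)ᴴ * E i = 1) (hRTP : ∑ j, (R j)ᴴ * R j = 1)
    (hunit : star ψ ⬝ᵥ ψ = 1) (hv : star v ⬝ᵥ v = 1) (hov : star ψ ⬝ᵥ v = 0)
    (hfid : 1 - η ≤ (star v ⬝ᵥ ((∑ j, ∑ i,
        R j * E i * vecMulVec v (star v) * (E i)ᴴ * (R j)ᴴ) *ᵥ v)).re) :
    (trace ((∑ j, (R j)ᴴ * vecMulVec ψ (star ψ) * R j)
        * (∑ i, E i * vecMulVec v (star v) * (E i)ᴴ))).re ≤ η := by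
  set ρ : Matrix (Fin n) (Fin n) ℂ := vecMulVec ψ (star ψ) with hρdef
  have hρpsd : ρ.PosSemidef := TCAux.posSemidef_vecMulVec_star ψ
  have hρH : ρᴴ = ρ := hρpsd.1
  have hρmul : ρ * ρ = ρ := by
    rw [hρdef, TCAux.vecMulVec_mul_vecMulVec, hunit, one_smul]
  set σ : Matrix (Fin n) (Fin n) ℂ := vecMulVec v (star v) with hσdef
  set Av : Matrix (Fin n) (Fin n) ℂ := ∑ j, ∑ i, R j * E i * σ * (E i)ᴴ * (R j)ᴴ
    with hAvdef
  have hKeyv := chan_key E R ρ σ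
  have hσpsd : σ.PosSemidef := TCAux.posSemidef_vecMulVec_star v
  have hσH : σᴴ = σ := hσpsd.1
  have hσmul : σ * σ = σ := by rw [hσdef, TCAux.vecMulVec_mul_vecMulVec, hv, one_smul]
  have htrσ : trace σ = 1 := by rw [hσdef, TCAux.trace_vecMulVec, hv]
  have hρσ : ρ * σ = 0 := by
    rw [hρdef, hσdef, TCAux.vecMulVec_mul_vecMulVec, hov, zero_smul]
  have hσρ : σ * ρ = 0 := by
    rw [hρdef, hσdef, TCAux.vecMulVec_mul_vecMulVec]
    have h2 : star v ⬝ᵥ ψ = 0 := by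
      have h3 := congrArg star hov
      rwa [star_dotProduct, star_star, star_zero] at h3
    rw [h2, zero_smul]
  have hQvpsd : (1 - ρ - σ).PosSemidef := by
    refine TCAux.posSemidef_of_proj ?_ ?_
    · rw [conjTranspose_sub, conjTranspose_sub, hρH, hσH, conjTranspose_one]
    · have h : (1 - ρ - σ) * (1 - ρ - σ)
          = 1 - ρ - σ - ρ + (ρ * ρ + ρ * σ) - σ + (σ * ρ + σ * σ) := by noncomm_ring
      rw [h, hρmul, hσmul, hρσ, hσρ]
      abel
  have hAvpsd : Av.PosSemidef := chan_psd E R σ hσpsd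
  have htrAv : trace Av = 1 := by rw [hAvdef, chan_trace E R hTP hRTP σ, htrσ]
  have hAv_v : star v ⬝ᵥ (Av *ᵥ v) = trace (Av * σ) := by
    rw [hσdef, TCAux.trace_mul_vecMulVec]
  have h1 : 0 ≤ (trace (Av * (1 - ρ - σ))).re :=
    TCAux.trace_psd_mul_psd_re_nonneg hAvpsd hQvpsd
  have e1 : Av * (1 - ρ - σ) = Av - Av * ρ - Av * σ := by
    rw [mul_sub, mul_sub, Matrix.mul_one]
  rw [e1, trace_sub, trace_sub, htrAv] at h1
  simp only [Complex.sub_re, Complex.one_re] at h1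
  rw [hAv_v] at hfid
  rw [hKeyv, ← hAvdef]
  linarith

end TCAux

/-- Near-optimality of the transpose channel (Theorem 3): if a trace-preserving recovery
`{R_j}` supported on the code achieves fidelity loss at most `η` on all pure code states,
then for every pure code state `ψ`, the square of its fidelity under `R ∘ E` is bounded by
`(1 + (d-1)η)` times the squared fidelity of `ψ` under the transpose channel composed
with `E`. Here `T = sqrt(E(P))` and `S` is its Moore–Penrose pseudoinverse. -/
theorem transpose_channel_near_optimal
    {n : ℕ} {I J : Type*} [Fintype I] [Fintype J]
    (E : I → Matrix (Fin n) (Fin n) ℂ) (R : J → Matrix (Fin n) (Fin n) ℂ)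
    (P T S : Matrix (Fin n) (Fin n) ℂ) (d : ℕ) (η : ℝ)
    (hP1 : P * P = P) (hP2 : Pᴴ = P) (hrank : P.rank = d) (hd : 1 ≤ d)
    (hTP : ∑ i, (E i)ᴴ * E i = 1)
    (hT : T.PosSemidef) (hTsq : T * T = ∑ i, E i * P * (E i)ᴴ)
    (hS : S.PosSemidef) (hSTS : S * T * S = S) (hTST : T * S * T = T)
    (hcomm : S * T = T * S)
    (hRTP : ∑ j, (R j)ᴴ * R j = 1) (hRP : ∀ j, R j = P * R j)
    (hη0 : 0 ≤ η) (hη1 : η ≤ 1)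
    (hηfid : ∀ ψ : Fin n → ℂ, star ψ ⬝ᵥ ψ = 1 → P *ᵥ ψ = ψ →
      1 - η ≤ (star ψ ⬝ᵥ ((∑ j, ∑ i,
        R j * E i * vecMulVec ψ (star ψ) * (E i)ᴴ * (R j)ᴴ) *ᵥ ψ)).re) :
    ∀ ψ : Fin n → ℂ, star ψ ⬝ᵥ ψ = 1 → P *ᵥ ψ = ψ →
      ((star ψ ⬝ᵥ ((∑ j, ∑ i,
          R j * E i * vecMulVec ψ (star ψ) * (E i)ᴴ * (R j)ᴴ) *ᵥ ψ)).re) ^ 2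
        ≤ (1 + ((d : ℝ) - 1) * η) *
          ∑ i, ∑ j, ‖star ψ ⬝ᵥ (((E i)ᴴ * S * E j) *ᵥ ψ)‖ ^ 2 := by
  intro ψ hunit hcode
  classical
  open TCAux in
  set ρ : Matrix (Fin n) (Fin n) ℂ := vecMulVec ψ (star ψ) with hρdef
  set A : Matrix (Fin n) (Fin n) ℂ :=
    ∑ j, ∑ i, R j * E i * ρ * (E i)ᴴ * (R j)ᴴ with hAdef
  set G : Matrix (Fin n) (Fin n) ℂ := ∑ i, E i * ρ * (E i)ᴴ with hGdef
  set K : Matrix (Fin n) (Fin n) ℂ := ∑ j, (R j)ᴴ * ρ * R j with hKdef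
  set N : Matrix (Fin n) (Fin n) ℂ := S * G * S with hNdef
  have hTH : Tᴴ = T := hT.1
  have hSH : Sᴴ = S := hS.1
  -- basic facts about ρ
  have hρpsd : ρ.PosSemidef := TCAux.posSemidef_vecMulVec_star ψ
  have hρH : ρᴴ = ρ := hρpsd.1
  have hρmul : ρ * ρ = ρ := by
    rw [hρdef, TCAux.vecMulVec_mul_vecMulVec, hunit, one_smul]
  have htrρ : trace ρ = 1 := by rw [hρdef, TCAux.trace_vecMulVec, hunit]
  -- PSD of building blocks
  have hGpsd : G.PosSemidef := by
    refine TCAux.posSemidef_sum _ fun i => ?_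
    exact hρpsd.mul_mul_conjTranspose_same (E i)
  have hGH : Gᴴ = G := hGpsd.1
  have hKpsd : K.PosSemidef := by
    refine TCAux.posSemidef_sum _ fun j => ?_
    exact hρpsd.conjTranspose_mul_mul_same (R j)
  have hKH : Kᴴ = K := hKpsd.1
  have hNpsd : N.PosSemidef := by
    have := hGpsd.mul_mul_conjTranspose_same S
    rwa [hSH] at this
  have hNH : Nᴴ = N := hNpsd.1
  -- the channel and its trace
  have htrA : ∀ X : Matrix (Fin n) (Fin n) ℂ,
      trace (∑ j, ∑ i, R j * E i * X * (E i)ᴴ * (R j)ᴴ) = trace X :=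
    fun X => TCAux.chan_trace E R hTP hRTP X
  have hApsd_gen : ∀ X : Matrix (Fin n) (Fin n) ℂ, X.PosSemidef →
      (∑ j, ∑ i, R j * E i * X * (E i)ᴴ * (R j)ᴴ).PosSemidef :=
    fun X hX => TCAux.chan_psd E R X hX
  -- key rearrangement : tr(K * E(X)) = tr(A_X * ρ)
  have hKey : ∀ X : Matrix (Fin n) (Fin n) ℂ,
      trace (K * (∑ i, E i * X * (E i)ᴴ))
        = trace ((∑ j, ∑ i, R j * E i * X * (E i)ᴴ * (R j)ᴴ) * ρ) := by
    intro X
    rw [hKdef, hρdef]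
    exact TCAux.chan_key E R (vecMulVec ψ (star ψ)) X
  -- the support projection Pr = T * S
  set Pr : Matrix (Fin n) (Fin n) ℂ := T * S with hPrdef
  have hPrH : Prᴴ = Pr := by rw [hPrdef, conjTranspose_mul, hSH, hTH, hcomm]
  have hPrI : Pr * Pr = Pr := by
    rw [hPrdef, Matrix.mul_assoc, ← Matrix.mul_assoc S T S, hSTS]
  have hQH : (1 - Pr)ᴴ = 1 - Pr := by rw [conjTranspose_sub, hPrH, conjTranspose_one]
  have hQI : (1 - Pr) * (1 - Pr) = 1 - Pr := by
    have h : (1 - Pr) * (1 - Pr) = 1 - Pr - Pr + Pr * Pr := by noncomm_ring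
    rw [h, hPrI]
    abel
  have hQpsd : (1 - Pr).PosSemidef := TCAux.posSemidef_of_proj hQH hQI
  have hQT2 : (1 - Pr) * (T * T) = 0 := by
    rw [sub_mul, Matrix.one_mul, hPrdef, Matrix.mul_assoc T S (T * T),
      ← Matrix.mul_assoc S T T, ← Matrix.mul_assoc T (S * T) T, ← Matrix.mul_assoc T S T, hTST]
    exact sub_self _
  -- P' = P - ρ is a projection
  set P' : Matrix (Fin n) (Fin n) ℂ := P - ρ with hP'def
  have hPρ : P * ρ = ρ := by
    rw [hρdef, TCAux.mul_vecMulVec, hcode]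
  have hρP : ρ * P = ρ := by
    have h := congrArg conjTranspose hPρ
    rwa [conjTranspose_mul, hρH, hP2] at h
  have hP'H : P'ᴴ = P' := by rw [hP'def, conjTranspose_sub, hP2, hρH]
  have hP'I : P' * P' = P' := by
    rw [hP'def, sub_mul, mul_sub, mul_sub, hP1, hPρ, hρP, hρmul]
    abel
  have hP'psd : P'.PosSemidef := TCAux.posSemidef_of_proj hP'H hP'I
  set G' : Matrix (Fin n) (Fin n) ℂ := ∑ i, E i * P' * (E i)ᴴ with hG'def
  have hG'psd : G'.PosSemidef :=
    TCAux.posSemidef_sum _ fun i => hP'psd.mul_mul_conjTranspose_same (E i)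
  have hsplit : T * T = G + G' := by
    rw [hTsq, hGdef, hG'def, ← Finset.sum_add_distrib]
    refine Finset.sum_congr rfl fun i _ => ?_
    have hP : P = ρ + P' := by rw [hP'def]; abel
    rw [hP, mul_add, add_mul]
  -- G is supported on the range of Pr
  have hQG : (1 - Pr) * G = 0 := by
    have hC : ∀ i : I, (1 - Pr) * (E i * ρ) = 0 := by
      have hterm : ∀ i : I, ((1 - Pr) * (E i * ρ))ᴴ * ((1 - Pr) * (E i * ρ))
          = (E i * ρ)ᴴ * ((1 - Pr) * (E i * ρ)) := by
        intro i
        rw [conjTranspose_mul, hQH, Matrix.mul_assoc, ← Matrix.mul_assoc (1 - Pr) (1 - Pr), hQI]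
      have htr : ∀ i : I, trace ((E i * ρ)ᴴ * ((1 - Pr) * (E i * ρ)))
          = trace ((1 - Pr) * (E i * ρ * (E i)ᴴ)) := by
        intro i
        rw [trace_mul_comm]
        congr 1
        rw [Matrix.mul_assoc]
        congr 1
        rw [conjTranspose_mul, hρH, ← Matrix.mul_assoc, Matrix.mul_assoc (E i) ρ ρ, hρmul]
      have hsum : ∑ i, (trace (((1 - Pr) * (E i * ρ))ᴴ * ((1 - Pr) * (E i * ρ)))).re
          = (trace ((1 - Pr) * G)).re := by
        rw [hGdef, Finset.mul_sum, trace_sum, Complex.re_sum]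
        refine Finset.sum_congr rfl fun i _ => ?_
        rw [hterm i, htr i]
      have hle : (trace ((1 - Pr) * G)).re ≤ 0 := by
        have h1 : 0 ≤ (trace ((1 - Pr) * (T * T - G))).re :=
          TCAux.trace_psd_mul_psd_re_nonneg hQpsd (by
            have : T * T - G = G' := by rw [hsplit]; abel
            rw [this]; exact hG'psd)
        rw [mul_sub, trace_sub, hQT2, trace_zero] at h1
        simp only [Complex.sub_re, Complex.zero_re] at h1
        linarith
      have hzero : ∀ i ∈ Finset.univ,
          (trace (((1 - Pr) * (E i * ρ))ᴴ * ((1 - Pr) * (E i * ρ)))).re = 0 := by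
        apply (Finset.sum_eq_zero_iff_of_nonneg ?_).mp
        · rw [hsum]
          refine le_antisymm hle ?_
          rw [← hsum]
          exact Finset.sum_nonneg fun i _ => TCAux.trace_ctm_re_nonneg _
        · exact fun i _ => TCAux.trace_ctm_re_nonneg _
      exact fun i => TCAux.eq_zero_of_trace_ctm _ (hzero i (Finset.mem_univ i))
    rw [hGdef, Finset.mul_sum]
    refine Finset.sum_eq_zero fun i _ => ?_
    rw [← Matrix.mul_assoc, hC i, Matrix.zero_mul]
  have hPrG : Pr * G = G := by
    have h := hQG
    rw [sub_mul, Matrix.one_mul, sub_eq_zero] at h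
    exact h.symm
  have hGPr : G * Pr = G := by
    have h := congrArg conjTranspose hPrG
    rwa [conjTranspose_mul, hGH, hPrH] at h
  have hTNT : T * N * T = G := by
    rw [hNdef]
    calc T * (S * G * S) * T = (T * S) * G * (S * T) := by simp only [Matrix.mul_assoc]
      _ = Pr * G * Pr := by rw [hcomm, hPrdef]
      _ = G := by rw [hPrG, hGPr]
  -- scalar quantities
  have hρMρ : ∀ M : Matrix (Fin n) (Fin n) ℂ,
      ρ * M * ρ = (star ψ ⬝ᵥ (M *ᵥ ψ)) • ρ := by
    intro M
    rw [hρdef, TCAux.vecMulVec_mul, TCAux.vecMulVec_mul_vecMulVec, dotProduct_mulVec]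
  have hFtr : star ψ ⬝ᵥ (A *ᵥ ψ) = trace (A * ρ) := by
    rw [hρdef, TCAux.trace_mul_vecMulVec]
  have hFKN : trace (K * T * N * T) = trace (A * ρ) := by
    have e : K * T * N * T = K * (T * N * T) := by simp only [Matrix.mul_assoc]
    rw [e, hTNT]
    exact hKey ρ
  have hNTKT : trace (N * T * K * T) = trace (K * T * N * T) := by
    rw [Matrix.mul_assoc (N * T) K T, trace_mul_comm, ← Matrix.mul_assoc]
  set F : ℝ := (trace (A * ρ)).re with hFdef
  set fKK : ℝ := (trace (K * T * K * T)).re with hfKKdef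
  set fNN : ℝ := (trace (N * T * N * T)).re with hfNNdef
  -- Cauchy-Schwarz
  have hquad : ∀ t : ℝ, 0 ≤ fNN * t ^ 2 + 2 * F * t + fKK := by
    intro t
    have hMH : (K + (t:ℂ) • N)ᴴ = K + (t:ℂ) • N := by
      rw [conjTranspose_add, conjTranspose_smul, hKH, hNH, Complex.star_def,
        Complex.conj_ofReal]
    have h0 := TCAux.quad_re_nonneg hT hMH
    set C : Matrix (Fin n) (Fin n) ℂ := (t:ℂ) • N with hCdef
    have hexp : (K + C) * T * (K + C) * T
        = K * T * K * T + K * T * C * T + (C * T * K * T + C * T * C * T) := by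
      noncomm_ring
    have e1 : K * T * C * T = (t:ℂ) • (K * T * N * T) := by
      rw [hCdef]; simp only [smul_mul_assoc, mul_smul_comm]
    have e2 : C * T * K * T = (t:ℂ) • (N * T * K * T) := by
      rw [hCdef]; simp only [smul_mul_assoc]
    have e3 : C * T * C * T = (t:ℂ) • ((t:ℂ) • (N * T * N * T)) := by
      rw [hCdef]; simp only [smul_mul_assoc, mul_smul_comm]
    rw [hexp, e1, e2, e3] at h0
    simp only [trace_add, trace_smul, smul_eq_mul, Complex.add_re,
      Complex.re_ofReal_mul, hNTKT, hFKN] at h0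
    rw [← hFdef, ← hfKKdef, ← hfNNdef] at h0
    nlinarith [h0]
  have hCS : F ^ 2 ≤ fNN * fKK := TCAux.cs_of_quadratic hquad
  -- identify fNN with the RHS sum
  have hSTS' : ∀ X : Matrix (Fin n) (Fin n) ℂ, S * (T * (S * X)) = S * X := by
    intro X
    rw [← Matrix.mul_assoc, ← Matrix.mul_assoc, hSTS]
  have hNTNT : trace (N * T * N * T) = trace (S * (G * (S * G))) := by
    have e1 : N * T * N * T = S * (G * (S * (T * (S * (G * (S * T)))))) := by
      rw [hNdef]; simp only [Matrix.mul_assoc]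
    rw [e1, hSTS' (G * (S * T))]
    have e2 : S * (G * (S * (G * (S * T)))) = (S * (G * (S * G))) * (S * T) := by
      simp only [Matrix.mul_assoc]
    rw [e2, trace_mul_comm, ← Matrix.mul_assoc, ← Matrix.mul_assoc, hSTS]
    simp only [Matrix.mul_assoc]
  have hW : fNN = ∑ i, ∑ j, ‖star ψ ⬝ᵥ (((E i)ᴴ * S * E j) *ᵥ ψ)‖ ^ 2 := by
    rw [hfNNdef, hNTNT]
    have e3 : S * (G * (S * G)) = ∑ i, ∑ j,
        (S * (E i * ρ * (E i)ᴴ)) * (S * (E j * ρ * (E j)ᴴ)) := by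
      rw [← Matrix.mul_assoc, hGdef, Finset.mul_sum, Finset.sum_mul]
      refine Finset.sum_congr rfl fun i _ => ?_
      rw [Finset.mul_sum]
    rw [e3, trace_sum, Complex.re_sum]
    refine Finset.sum_congr rfl fun i _ => ?_
    rw [trace_sum, Complex.re_sum]
    refine Finset.sum_congr rfl fun j _ => ?_
    set M : Matrix (Fin n) (Fin n) ℂ := (E i)ᴴ * S * E j with hMdef
    set z : ℂ := star ψ ⬝ᵥ (M *ᵥ ψ) with hzdef
    have e4 : (S * (E i * ρ * (E i)ᴴ)) * (S * (E j * ρ * (E j)ᴴ))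
        = S * (E i * ((ρ * M * ρ) * (E j)ᴴ)) := by
      rw [hMdef]; simp only [Matrix.mul_assoc]
    rw [e4, hρMρ M, ← hzdef]
    have e5 : S * (E i * ((z • ρ) * (E j)ᴴ)) = z • (S * (E i * (ρ * (E j)ᴴ))) := by
      simp only [smul_mul_assoc, mul_smul_comm]
    rw [e5, trace_smul, smul_eq_mul]
    have e6 : trace (S * (E i * (ρ * (E j)ᴴ))) = trace (Mᴴ * ρ) := by
      have e7 : Mᴴ = (E j)ᴴ * S * E i := by
        rw [hMdef, conjTranspose_mul, conjTranspose_mul, conjTranspose_conjTranspose, hSH,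
          Matrix.mul_assoc]
      rw [e7]
      have e7b : S * (E i * (ρ * (E j)ᴴ)) = (S * (E i * ρ)) * (E j)ᴴ := by
        simp only [Matrix.mul_assoc]
      rw [e7b, trace_mul_comm]
      simp only [Matrix.mul_assoc]
    rw [e6]
    have e8 : trace (Mᴴ * ρ) = star ψ ⬝ᵥ (Mᴴ *ᵥ ψ) := by
      rw [hρdef, TCAux.trace_mul_vecMulVec]
    rw [e8, ← TCAux.star_dot M ψ ψ, ← hzdef]
    rw [Complex.mul_conj, Complex.ofReal_re, Complex.sq_norm]
  -- bound on fKK : fKK ≤ Re tr (K * T * T)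
  have h1ρpsd : (1 - ρ).PosSemidef := by
    refine TCAux.posSemidef_of_proj ?_ ?_
    · rw [conjTranspose_sub, hρH, conjTranspose_one]
    · have h : (1 - ρ) * (1 - ρ) = 1 - ρ - ρ + ρ * ρ := by noncomm_ring
      rw [h, hρmul]; abel
  have h1Kpsd : (1 - K).PosSemidef := by
    have e : (1 : Matrix (Fin n) (Fin n) ℂ) - K = ∑ j, (R j)ᴴ * (1 - ρ) * R j := by
      have : ∀ j : J, (R j)ᴴ * (1 - ρ) * R j = (R j)ᴴ * R j - (R j)ᴴ * ρ * R j := by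
        intro j; rw [mul_sub, Matrix.mul_one, sub_mul]
      simp_rw [this]
      rw [Finset.sum_sub_distrib, hRTP, hKdef]
    rw [e]
    exact TCAux.posSemidef_sum _ fun j => h1ρpsd.conjTranspose_mul_mul_same (R j)
  have hTKTpsd : (T * K * T).PosSemidef := by
    have := hKpsd.mul_mul_conjTranspose_same T
    rwa [hTH] at this
  have hKKle : fKK ≤ (trace (K * (T * T))).re := by
    have h1 : 0 ≤ (trace ((T * K * T) * (1 - K))).re :=
      TCAux.trace_psd_mul_psd_re_nonneg hTKTpsd h1Kpsd
    have e1 : (T * K * T) * (1 - K) = T * K * T - (T * K * T) * K := by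
      rw [mul_sub, Matrix.mul_one]
    have e2 : trace ((T * K * T) * K) = trace (K * T * K * T) := by
      rw [trace_mul_comm, ← Matrix.mul_assoc, ← Matrix.mul_assoc]
    have e3 : trace (T * K * T) = trace (K * (T * T)) := by
      rw [Matrix.mul_assoc, trace_mul_comm, Matrix.mul_assoc]
    rw [e1, trace_sub, e2, e3] at h1
    rw [hfKKdef]
    simp only [Complex.sub_re] at h1
    linarith
  -- split tr(K * T * T) = tr(A ρ) + tr(K G')
  have hsplit2 : trace (K * (T * T)) = trace (A * ρ) + trace (K * G') := by
    rw [hsplit, mul_add, trace_add]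
    congr 1
    exact hKey ρ
  -- F ≤ 1
  have hApsd : A.PosSemidef := hApsd_gen ρ hρpsd
  have htrA1 : trace A = 1 := by rw [hAdef, htrA ρ, htrρ]
  have hFle1 : F ≤ 1 := by
    have h1 : 0 ≤ (trace (A * (1 - ρ))).re :=
      TCAux.trace_psd_mul_psd_re_nonneg hApsd h1ρpsd
    rw [mul_sub, Matrix.mul_one, trace_sub, htrA1] at h1
    simp only [Complex.sub_re, Complex.one_re] at h1
    rw [hFdef]
    linarith
  -- per-vector fidelity bound
  have hper : ∀ v : Fin n → ℂ, star v ⬝ᵥ v = 1 → P *ᵥ v = v → star ψ ⬝ᵥ v = 0 →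
      (trace (K * (∑ i, E i * vecMulVec v (star v) * (E i)ᴴ))).re ≤ η := by
    intro v hv hPv hov
    have hfid := hηfid v hv hPv
    rw [hKdef, hρdef]
    exact TCAux.per_vector E R ψ v η hTP hRTP hunit hv hov hfid
  -- spectral decomposition of P'
  obtain ⟨c, vv, hdec, h01, hunitv, hfix⟩ := TCAux.proj_decomp P' hP'H hP'I
  have hP'ψ : P' *ᵥ ψ = 0 := by
    rw [hP'def, sub_mulVec, hcode, hρdef, TCAux.vecMulVec_mulVec, hunit, one_smul, sub_self]
  have hov : ∀ k, c k = 1 → star ψ ⬝ᵥ vv k = 0 := by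
    intro k hk
    have h2 : star ψ ᵥ* P' = 0 := by
      have h3 := congrArg star hP'ψ
      rwa [star_mulVec, hP'H, star_zero] at h3
    rw [← hfix k hk, dotProduct_mulVec, h2, zero_dotProduct]
  have hPvv : ∀ k, c k = 1 → P *ᵥ vv k = vv k := by
    intro k hk
    have h1 : P * P' = P' := by rw [hP'def, mul_sub, hP1, hPρ]
    calc P *ᵥ vv k = P *ᵥ (P' *ᵥ vv k) := by rw [hfix k hk]
      _ = (P * P') *ᵥ vv k := mulVec_mulVec _ _ _
      _ = P' *ᵥ vv k := by rw [h1]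
      _ = vv k := hfix k hk
  -- trace of P'
  have htrP : trace P = (d : ℂ) := by
    rw [TCAux.proj_trace_eq_rank P hP2 hP1, hrank]
  have htrP' : trace P' = (d : ℂ) - 1 := by rw [hP'def, trace_sub, htrP, htrρ]
  have hsumc : (∑ k, c k) = (d : ℝ) - 1 := by
    have h1 : trace P' = ((∑ k, c k : ℝ) : ℂ) := by
      conv_lhs => rw [hdec]
      rw [trace_sum]
      have h2 : ∀ k : Fin n, trace ((c k : ℂ) • vecMulVec (vv k) (star (vv k)))
          = (c k : ℂ) := by
        intro k
        rw [trace_smul, TCAux.trace_vecMulVec, hunitv k, smul_eq_mul, mul_one]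
      rw [Finset.sum_congr rfl fun k _ => h2 k]
      push_cast
      ring
    rw [htrP'] at h1
    have h4 : ((d : ℝ) - 1 : ℝ) = ((∑ k, c k : ℝ)) := by exact_mod_cast h1
    exact h4.symm
  -- bound tr(K G')
  have hKG' : (trace (K * G')).re ≤ ((d:ℝ) - 1) * η := by
    have hG'2 : G' = ∑ k, (c k : ℂ) •
        (∑ i, E i * vecMulVec (vv k) (star (vv k)) * (E i)ᴴ) := by
      rw [hG'def]
      conv_lhs => rw [hdec]
      have hterm : ∀ i : I, E i * (∑ k, (c k : ℂ) • vecMulVec (vv k) (star (vv k))) * (E i)ᴴ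
          = ∑ k, (c k : ℂ) • (E i * vecMulVec (vv k) (star (vv k)) * (E i)ᴴ) := by
        intro i
        rw [Finset.mul_sum, Finset.sum_mul]
        refine Finset.sum_congr rfl fun k _ => ?_
        rw [mul_smul_comm, smul_mul_assoc]
      rw [Finset.sum_congr rfl fun i _ => hterm i, Finset.sum_comm]
      refine Finset.sum_congr rfl fun k _ => ?_
      exact (Finset.smul_sum).symm
    rw [hG'2, Finset.mul_sum, trace_sum]
    have h5 : ∀ k : Fin n, trace (K * ((c k : ℂ) •
        (∑ i, E i * vecMulVec (vv k) (star (vv k)) * (E i)ᴴ)))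
        = (c k : ℂ) * trace (K * (∑ i, E i * vecMulVec (vv k) (star (vv k)) * (E i)ᴴ)) := by
      intro k
      rw [mul_smul_comm, trace_smul, smul_eq_mul]
    rw [Finset.sum_congr rfl fun k _ => h5 k, Complex.re_sum]
    have h6 : ∀ k : Fin n,
        ((c k : ℂ) * trace (K * (∑ i, E i * vecMulVec (vv k) (star (vv k)) * (E i)ᴴ))).re
          ≤ c k * η := by
      intro k
      rw [Complex.re_ofReal_mul]
      rcases h01 k with h | h
      · rw [h]; simp
      · rw [h]; simp only [one_mul]
        exact hper (vv k) (hunitv k) (hPvv k h) (hov k h)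
    calc (∑ k, ((c k : ℂ) * trace (K * (∑ i, E i * vecMulVec (vv k) (star (vv k)) * (E i)ᴴ))).re)
        ≤ ∑ k, c k * η := Finset.sum_le_sum fun k _ => h6 k
      _ = (∑ k, c k) * η := by rw [Finset.sum_mul]
      _ = ((d:ℝ) - 1) * η := by rw [hsumc]
  -- final assembly
  have hfKKle2 : fKK ≤ 1 + ((d:ℝ) - 1) * η := by
    have h2 : (trace (K * (T * T))).re = F + (trace (K * G')).re := by
      rw [hsplit2, Complex.add_re, hFdef]
    linarith [hKKle, hFle1, hKG']
  have hWnn : 0 ≤ fNN := by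
    rw [hW]
    exact Finset.sum_nonneg fun i _ => Finset.sum_nonneg fun j _ => by positivity
  rw [hFtr, ← hFdef, ← hW]
  nlinarith [hCS, hfKKle2, hWnn, hCS]
end

section
/- Bound on the recovered image of the code projector: Let {E_i}_{i∈I} be a TP Kraus family on ℂⁿ and P an orthogonal projection of rank d ≥ 1. Let {R_j}_{j∈J} be a finite Kraus family with ∑_j R_jᴴ R_j = 1 and R_j = P R_j for all j, and let η ∈ [0,1] be such that ⟨φ, (∑_{j,i} R_j E_i (φφᴴ) E_iᴴ R_jᴴ) φ⟩ ≥ 1 − η for every unit vector φ with P φ = φ. Then for every unit vector ψ with P ψ = ψ: ⟨ψ, (∑_{j,i} R_j E_i P E_iᴴ R_jᴴ) ψ⟩ ≤ 1 + (d−1)·η. -/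
open Matrix
open scoped ComplexOrder

section Helpers
variable {n : ℕ}

lemma trace_nonneg' {A : Matrix (Fin n) (Fin n) ℂ} (hA : A.PosSemidef) : 0 ≤ A.trace := by
  rw [Matrix.trace]
  apply Finset.sum_nonneg
  intro a _
  have := hA.dotProduct_mulVec_nonneg (Pi.single a 1)
  simpa [Matrix.diag, dotProduct, Matrix.mulVec, Pi.single_apply, apply_ite] using this

lemma trace_mul_nonneg' {A B : Matrix (Fin n) (Fin n) ℂ} (hA : A.PosSemidef)
    (hB : B.PosSemidef) : 0 ≤ (A * B).trace := by
  obtain ⟨C, rfl⟩ : ∃ C : Matrix (Fin n) (Fin n) ℂ, B = Cᴴ * C := by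
    open scoped MatrixOrder Matrix.Norms.L2Operator in
    exact CStarAlgebra.nonneg_iff_eq_star_mul_self.mp hB.nonneg
  have : (A * (Cᴴ * C)).trace = (C * A * Cᴴ).trace := by
    rw [Matrix.trace_mul_comm, mul_assoc, Matrix.trace_mul_comm]
  rw [this]
  exact trace_nonneg' (hA.mul_mul_conjTranspose_same C)

lemma psd_sum {ι : Type*} (s : Finset ι) (f : ι → Matrix (Fin n) (Fin n) ℂ)
    (h : ∀ i ∈ s, (f i).PosSemidef) : (∑ i ∈ s, f i).PosSemidef :=
  Finset.sum_induction f _ (fun _ _ ha hb => ha.add hb) Matrix.PosSemidef.zero h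

lemma trace_pair (M : Matrix (Fin n) (Fin n) ℂ) (v : Fin n → ℂ) :
    (M * vecMulVec v (star v)).trace = star v ⬝ᵥ (M *ᵥ v) := by
  simp only [Matrix.trace, Matrix.diag, Matrix.mul_apply, Matrix.vecMulVec_apply,
    dotProduct, Matrix.mulVec, Pi.star_apply]
  exact Finset.sum_congr rfl fun a _ => by rw [Finset.mul_sum]; exact Finset.sum_congr rfl fun b _ => by ring

lemma trace_cyc (X B Y : Matrix (Fin n) (Fin n) ℂ) :
    (X * B * Y).trace = (B * (Y * X)).trace := by
  rw [Matrix.trace_mul_comm (X * B) Y, ← mul_assoc, Matrix.trace_mul_comm (Y * X) B]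

lemma trace_eq_rank' {P : Matrix (Fin n) (Fin n) ℂ} (hP1 : P * P = P) :
    P.trace = (P.rank : ℂ) := by
  have hproj : LinearMap.IsProj (LinearMap.range P.mulVecLin) P.mulVecLin := by
    constructor
    · intro x; exact LinearMap.mem_range_self _ x
    · rintro x ⟨y, rfl⟩
      show P *ᵥ (P *ᵥ y) = P *ᵥ y
      rw [Matrix.mulVec_mulVec, hP1]
  have h := hproj.trace
  rw [LinearMap.trace_eq_matrix_trace ℂ (Pi.basisFun ℂ (Fin n)),
    LinearMap.toMatrix_eq_toMatrix', ← Matrix.toLin'_apply', LinearMap.toMatrix'_toLin'] at h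
  rw [h, Matrix.rank, Matrix.toLin'_apply']

lemma psd_vecMulVec (v : Fin n → ℂ) : (vecMulVec v (star v)).PosSemidef := by
  rw [Matrix.vecMulVec_eq (Fin 1), ← Matrix.conjTranspose_replicateCol]
  exact Matrix.posSemidef_self_mul_conjTranspose _

section Kraus
variable {I J : Type*} [Fintype I] [Fintype J]
    (E : I → Matrix (Fin n) (Fin n) ℂ) (R : J → Matrix (Fin n) (Fin n) ℂ)

lemma sum_pair (B ρ : Matrix (Fin n) (Fin n) ℂ) :
    ((∑ j, ∑ i, R j * E i * B * (E i)ᴴ * (R j)ᴴ) * ρ).trace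
      = ((∑ j, ∑ i, (E i)ᴴ * (R j)ᴴ * ρ * R j * E i) * B).trace := by
  simp only [Finset.sum_mul, Matrix.trace_sum]
  refine Finset.sum_congr rfl fun j _ => Finset.sum_congr rfl fun i _ => ?_
  calc (R j * E i * B * (E i)ᴴ * (R j)ᴴ * ρ).trace
      = ((R j * E i) * B * ((E i)ᴴ * ((R j)ᴴ * ρ))).trace := by simp only [mul_assoc]
    _ = (B * (((E i)ᴴ * ((R j)ᴴ * ρ)) * (R j * E i))).trace := trace_cyc _ _ _
    _ = ((E i)ᴴ * (R j)ᴴ * ρ * R j * E i * B).trace := by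
        rw [Matrix.trace_mul_comm]; simp only [mul_assoc]

lemma trace_N (hTP : ∑ i, (E i)ᴴ * E i = 1) (hRTP : ∑ j, (R j)ᴴ * R j = 1)
    (B : Matrix (Fin n) (Fin n) ℂ) :
    (∑ j, ∑ i, R j * E i * B * (E i)ᴴ * (R j)ᴴ).trace = B.trace := by
  calc (∑ j, ∑ i, R j * E i * B * (E i)ᴴ * (R j)ᴴ).trace
      = ∑ i, ∑ j, (R j * E i * B * (E i)ᴴ * (R j)ᴴ).trace := by
        simp only [Matrix.trace_sum]
        exact Finset.sum_comm
    _ = ∑ i, (B * ((E i)ᴴ * E i)).trace := by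
        refine Finset.sum_congr rfl fun i _ => ?_
        calc ∑ j, (R j * E i * B * (E i)ᴴ * (R j)ᴴ).trace
            = ∑ j, ((E i * B * (E i)ᴴ) * ((R j)ᴴ * R j)).trace := by
              refine Finset.sum_congr rfl fun j _ => ?_
              rw [show R j * E i * B * (E i)ᴴ * (R j)ᴴ
                  = R j * (E i * B * (E i)ᴴ) * (R j)ᴴ by simp only [mul_assoc],
                trace_cyc]
          _ = ((E i * B * (E i)ᴴ) * ∑ j, (R j)ᴴ * R j).trace := by
              rw [← Matrix.trace_sum, ← Finset.mul_sum]
          _ = (B * ((E i)ᴴ * E i)).trace := by rw [hRTP, mul_one, trace_cyc]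
    _ = B.trace := by
        rw [← Matrix.trace_sum, ← Finset.mul_sum, hTP, mul_one]

lemma psd_N {B : Matrix (Fin n) (Fin n) ℂ} (hB : B.PosSemidef) :
    (∑ j, ∑ i, R j * E i * B * (E i)ᴴ * (R j)ᴴ).PosSemidef := by
  refine psd_sum _ _ fun j _ => psd_sum _ _ fun i _ => ?_
  have := hB.mul_mul_conjTranspose_same (R j * E i)
  simpa [Matrix.conjTranspose_mul, mul_assoc] using this

lemma psd_A {ρ : Matrix (Fin n) (Fin n) ℂ} (hρ : ρ.PosSemidef) :
    (∑ j, ∑ i, (E i)ᴴ * (R j)ᴴ * ρ * R j * E i).PosSemidef := by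
  refine psd_sum _ _ fun j _ => psd_sum _ _ fun i _ => ?_
  have := hρ.conjTranspose_mul_mul_same (R j * E i)
  simpa [Matrix.conjTranspose_mul, mul_assoc] using this

end Kraus

lemma mul_vmv (M : Matrix (Fin n) (Fin n) ℂ) (v w : Fin n → ℂ) :
    M * vecMulVec v w = vecMulVec (M *ᵥ v) w := by
  ext a b
  simp [Matrix.mul_apply, Matrix.vecMulVec_apply, Matrix.mulVec, dotProduct,
    Finset.sum_mul, mul_assoc]

lemma vmv_mulVec (v w x : Fin n → ℂ) :
    vecMulVec v w *ᵥ x = (w ⬝ᵥ x) • v := by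
  funext a
  simp [Matrix.mulVec, dotProduct, Matrix.vecMulVec_apply, Finset.sum_mul,
    mul_comm, mul_left_comm, Finset.mul_sum]

lemma vmv_zero_left (w : Fin n → ℂ) : vecMulVec (0 : Fin n → ℂ) w = 0 := by
  ext a b; simp [Matrix.vecMulVec_apply]

lemma vmv_conjTranspose (v : Fin n → ℂ) :
    (vecMulVec v (star v))ᴴ = vecMulVec v (star v) := by
  ext a b; simp [Matrix.conjTranspose_apply, Matrix.vecMulVec_apply, mul_comm]

lemma vmv_trace (v : Fin n → ℂ) : (vecMulVec v (star v)).trace = star v ⬝ᵥ v := by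
  simp [Matrix.trace, Matrix.diag, Matrix.vecMulVec_apply, dotProduct, mul_comm]
end Helpers

/-- Bound on the recovered image of the code projector: if the trace-preserving recovery
`{R_j}`, supported on the code of the rank-`d` projection `P`, achieves fidelity loss at
most `η` on every pure code state, then for every pure code state `ψ`,
`⟨ψ, (∑_{j,i} R_j E_i P E_iᴴ R_jᴴ) ψ⟩ ≤ 1 + (d-1)η`. -/
theorem recovered_code_projector_bound
    {n : ℕ} {I J : Type*} [Fintype I] [Fintype J]
    (E : I → Matrix (Fin n) (Fin n) ℂ) (R : J → Matrix (Fin n) (Fin n) ℂ)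
    (P : Matrix (Fin n) (Fin n) ℂ) (d : ℕ) (η : ℝ)
    (hP1 : P * P = P) (hP2 : Pᴴ = P) (hrank : P.rank = d) (hd : 1 ≤ d)
    (hTP : ∑ i, (E i)ᴴ * E i = 1)
    (hRTP : ∑ j, (R j)ᴴ * R j = 1) (hRP : ∀ j, R j = P * R j)
    (hη0 : 0 ≤ η) (hη1 : η ≤ 1)
    (hηfid : ∀ φ : Fin n → ℂ, star φ ⬝ᵥ φ = 1 → P *ᵥ φ = φ →
      1 - η ≤ (star φ ⬝ᵥ ((∑ j, ∑ i,
        R j * E i * vecMulVec φ (star φ) * (E i)ᴴ * (R j)ᴴ) *ᵥ φ)).re) :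
    ∀ ψ : Fin n → ℂ, star ψ ⬝ᵥ ψ = 1 → P *ᵥ ψ = ψ →
      (star ψ ⬝ᵥ ((∑ j, ∑ i, R j * E i * P * (E i)ᴴ * (R j)ᴴ) *ᵥ ψ)).re
        ≤ 1 + ((d : ℝ) - 1) * η := by
  intro ψ hψ hPψ
  set ρ : Matrix (Fin n) (Fin n) ℂ := vecMulVec ψ (star ψ) with hρdef
  have hρpsd : ρ.PosSemidef := psd_vecMulVec ψ
  have hρH : ρᴴ = ρ := vmv_conjTranspose ψ
  have hρψ : ρ *ᵥ ψ = ψ := by rw [hρdef, vmv_mulVec, hψ, one_smul]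
  have hPρ : P * ρ = ρ := by rw [hρdef, mul_vmv, hPψ]
  have hρP : ρ * P = ρ := by
    have h := congrArg Matrix.conjTranspose hPρ
    rwa [Matrix.conjTranspose_mul, hρH, hP2] at h
  have hρ2 : ρ * ρ = ρ := by rw [hρdef, mul_vmv, ← hρdef, hρψ]
  have hρtr : ρ.trace = 1 := by rw [hρdef, vmv_trace, hψ]
  set Q : Matrix (Fin n) (Fin n) ℂ := P - ρ with hQdef
  have hQH : Qᴴ = Q := by rw [hQdef, Matrix.conjTranspose_sub, hP2, hρH]
  have hPQ : P * Q = Q := by rw [hQdef, mul_sub, hP1, hPρ]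
  have hρQ : ρ * Q = 0 := by rw [hQdef, mul_sub, hρP, hρ2, sub_self]
  have hQ2 : Q * Q = Q := by
    rw [hQdef, sub_mul, mul_sub, mul_sub, hP1, hPρ, hρP, hρ2]
    abel
  have hQtr : Q.trace = (d : ℂ) - 1 := by
    rw [hQdef, Matrix.trace_sub, trace_eq_rank' hP1, hrank, hρtr]
  set A : Matrix (Fin n) (Fin n) ℂ := ∑ j, ∑ i, (E i)ᴴ * (R j)ᴴ * ρ * R j * E i with hAdef
  have hApsd : A.PosSemidef := psd_A E R hρpsd
  have hone_sub : (1 - ρ).PosSemidef := by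
    have hH : (1 - ρ)ᴴ = 1 - ρ := by
      rw [Matrix.conjTranspose_sub, Matrix.conjTranspose_one, hρH]
    have h2 : (1 - ρ) * (1 - ρ) = 1 - ρ := by
      rw [mul_sub, sub_mul, sub_mul, hρ2]
      simp only [one_mul, mul_one]
      abel
    have h : 1 - ρ = (1 - ρ)ᴴ * (1 - ρ) := by rw [hH, h2]
    rw [h]; exact Matrix.posSemidef_conjTranspose_mul_self _
  -- Bound 1
  have hb1 : ((A * ρ).trace).re ≤ 1 := by
    set C : Matrix (Fin n) (Fin n) ℂ := ∑ j, ∑ i, R j * E i * ρ * (E i)ᴴ * (R j)ᴴ with hCdef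
    have h1 : (C * ρ).trace = (A * ρ).trace := sum_pair E R ρ ρ
    have hCpsd : C.PosSemidef := psd_N E R hρpsd
    have hCtr : C.trace = 1 := by rw [hCdef, trace_N E R hTP hRTP, hρtr]
    have h2 := trace_mul_nonneg' hCpsd hone_sub
    rw [mul_sub, Matrix.trace_sub, mul_one, hCtr] at h2
    have h3 := (Complex.le_def.mp h2).1
    rw [← h1]
    simp only [Complex.zero_re, Complex.sub_re, Complex.one_re] at h3
    linarith
  -- key PSD fact
  have hkey : ((η : ℂ) • Q - Q * A * Q).PosSemidef := by
    refine Matrix.PosSemidef.of_dotProduct_mulVec_nonneg ?_ ?_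
    · show ((η : ℂ) • Q - Q * A * Q)ᴴ = (η : ℂ) • Q - Q * A * Q
      simp only [Matrix.conjTranspose_sub, Matrix.conjTranspose_smul,
        Matrix.conjTranspose_mul, hQH, hApsd.1.eq, Complex.star_def,
        Complex.conj_ofReal, mul_assoc]
    · intro x
      set φ : Fin n → ℂ := Q *ᵥ x with hφdef
      have hstar : star φ = star x ᵥ* Q := by rw [hφdef, Matrix.star_mulVec, hQH]
      have e1 : star x ⬝ᵥ (Q *ᵥ x) = star φ ⬝ᵥ φ := by
        conv_lhs => rw [← hQ2]
        rw [← Matrix.mulVec_mulVec, Matrix.dotProduct_mulVec, ← hstar, ← hφdef]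
      have e2 : star x ⬝ᵥ ((Q * A * Q) *ᵥ x) = star φ ⬝ᵥ (A *ᵥ φ) := by
        rw [show Q * A * Q = Q * (A * Q) from by rw [mul_assoc],
          ← Matrix.mulVec_mulVec, Matrix.dotProduct_mulVec, ← hstar,
          ← Matrix.mulVec_mulVec, ← hφdef]
      rw [Matrix.sub_mulVec, dotProduct_sub, Matrix.smul_mulVec,
        dotProduct_smul, e1, e2, smul_eq_mul]
      by_cases hφ0 : φ = 0
      · simp [hφ0]
      · have hpos : 0 < star φ ⬝ᵥ φ := Matrix.dotProduct_star_self_pos_iff.mpr hφ0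
        set r : ℝ := (star φ ⬝ᵥ φ).re with hrdef
        have hrpos : 0 < r := (Complex.lt_def.mp hpos).1
        have hsr : star φ ⬝ᵥ φ = (r : ℂ) := by
          have him := (Complex.lt_def.mp hpos).2
          apply Complex.ext
          · simp [hrdef]
          · simp [← him]
        set c : ℝ := (Real.sqrt r)⁻¹ with hcdef
        set φ' : Fin n → ℂ := (c : ℂ) • φ with hφ'def
        have hsqrt : Real.sqrt r * Real.sqrt r = r := Real.mul_self_sqrt hrpos.le
        have hcc : c * c * r = 1 := by
          rw [hcdef, ← mul_inv, hsqrt]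
          exact inv_mul_cancel₀ hrpos.ne'
        have hc : (c : ℂ) * ((c : ℂ) * (r : ℂ)) = 1 := by
          rw [← mul_assoc]
          exact_mod_cast congrArg (fun t : ℝ => (t : ℂ)) hcc
        have hφ'unit : star φ' ⬝ᵥ φ' = 1 := by
          rw [hφ'def, star_smul, smul_dotProduct, dotProduct_smul, hsr]
          simpa [Complex.star_def, Complex.conj_ofReal, smul_eq_mul] using hc
        have hPφ : P *ᵥ φ = φ := by rw [hφdef, Matrix.mulVec_mulVec, hPQ]
        have hPφ' : P *ᵥ φ' = φ' := by rw [hφ'def, Matrix.mulVec_smul, hPφ]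
        have hρφ : ρ *ᵥ φ = 0 := by rw [hφdef, Matrix.mulVec_mulVec, hρQ, Matrix.zero_mulVec]
        set σ : Matrix (Fin n) (Fin n) ℂ := vecMulVec φ' (star φ') with hσdef
        have hσpsd : σ.PosSemidef := psd_vecMulVec φ'
        have hσH : σᴴ = σ := vmv_conjTranspose φ'
        have hσ2 : σ * σ = σ := by rw [hσdef, mul_vmv, ← hσdef, vmv_mulVec, hφ'unit, one_smul]
        have hρσ : ρ * σ = 0 := by
          rw [hσdef, mul_vmv, hφ'def, Matrix.mulVec_smul, hρφ, smul_zero, vmv_zero_left]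
        have hσρ : σ * ρ = 0 := by
          have h := congrArg Matrix.conjTranspose hρσ
          rwa [Matrix.conjTranspose_mul, hσH, hρH, Matrix.conjTranspose_zero] at h
        have hσtr : σ.trace = 1 := by rw [hσdef, vmv_trace, hφ'unit]
        set D : Matrix (Fin n) (Fin n) ℂ := 1 - ρ - σ with hDdef
        have hDpsd : D.PosSemidef := by
          have hDH : Dᴴ = D := by
            rw [hDdef, Matrix.conjTranspose_sub, Matrix.conjTranspose_sub,
              Matrix.conjTranspose_one, hρH, hσH]
          have hD2 : D * D = D := by
            rw [hDdef]
            simp only [sub_mul, mul_sub, one_mul, mul_one, hρ2, hσ2, hρσ, hσρ, sub_zero]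
            abel
          have h : D = Dᴴ * D := by rw [hDH, hD2]
          rw [h]; exact Matrix.posSemidef_conjTranspose_mul_self _
        set C : Matrix (Fin n) (Fin n) ℂ := ∑ j, ∑ i, R j * E i * σ * (E i)ᴴ * (R j)ᴴ with hCdef
        have hCpsd : C.PosSemidef := psd_N E R hσpsd
        have hCtr : C.trace = 1 := by rw [hCdef, trace_N E R hTP hRTP, hσtr]
        have hfid := hηfid φ' hφ'unit hPφ'
        rw [← hσdef, ← hCdef] at hfid
        have hfidtr : (C * σ).trace = star φ' ⬝ᵥ (C *ᵥ φ') := by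
          rw [hσdef]; exact trace_pair C φ'
        have hAσ : (C * ρ).trace = (A * σ).trace := sum_pair E R σ ρ
        have hD3 := trace_mul_nonneg' hCpsd hDpsd
        rw [hDdef, mul_sub, mul_sub, mul_one, Matrix.trace_sub, Matrix.trace_sub, hCtr] at hD3
        have hre := (Complex.le_def.mp hD3).1
        simp only [Complex.zero_re, Complex.sub_re, Complex.one_re] at hre
        have hfid' : 1 - η ≤ ((C * σ).trace).re := by rw [hfidtr]; exact hfid
        have hAφ' : star φ' ⬝ᵥ (A *ᵥ φ') = (C * ρ).trace := by
          rw [hAσ, hσdef]; exact (trace_pair A φ').symm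
        have ht : (star φ' ⬝ᵥ (A *ᵥ φ')).re ≤ η := by
          rw [hAφ']; linarith
        have htpos := hApsd.dotProduct_mulVec_nonneg φ'
        have him : (star φ' ⬝ᵥ (A *ᵥ φ')).im = 0 := ((Complex.le_def.mp htpos).2).symm
        have h1 : star φ' ⬝ᵥ (A *ᵥ φ') = (c : ℂ) * ((c : ℂ) * (star φ ⬝ᵥ (A *ᵥ φ))) := by
          rw [hφ'def, star_smul, smul_dotProduct, Matrix.mulVec_smul,
            dotProduct_smul]
          simp [Complex.star_def, Complex.conj_ofReal, smul_eq_mul, mul_assoc]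
        have hscale : (r : ℂ) * (star φ' ⬝ᵥ (A *ᵥ φ')) = star φ ⬝ᵥ (A *ᵥ φ) := by
          rw [h1]
          linear_combination (star φ ⬝ᵥ (A *ᵥ φ)) * hc
        rw [hsr, ← hscale, Complex.le_def]
        constructor
        · simp only [Complex.zero_re, Complex.sub_re, Complex.mul_re, Complex.ofReal_re,
            Complex.ofReal_im, him, zero_mul, mul_zero, sub_zero]
          nlinarith [hrpos.le, ht, hη0]
        · simp only [Complex.zero_im, Complex.sub_im, Complex.mul_im, Complex.ofReal_re,
            Complex.ofReal_im, him, zero_mul, mul_zero, add_zero, zero_add]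
          ring
  -- Bound 2
  have hb2 : ((A * Q).trace).re ≤ ((d : ℝ) - 1) * η := by
    have h := trace_nonneg' hkey
    rw [Matrix.trace_sub, Matrix.trace_smul, hQtr, trace_cyc Q A Q, hQ2] at h
    have hre := (Complex.le_def.mp h).1
    simp only [Complex.zero_re, Complex.sub_re, smul_eq_mul, Complex.mul_re,
      Complex.ofReal_re, Complex.ofReal_im, Complex.sub_re, Complex.sub_im,
      Complex.natCast_re, Complex.natCast_im, Complex.one_re, Complex.one_im,
      zero_mul, mul_zero, sub_zero, zero_sub, neg_zero] at hre
    linarith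
  -- assemble
  have hPdec : P = ρ + Q := by rw [hQdef]; abel
  have hmain : star ψ ⬝ᵥ ((∑ j, ∑ i, R j * E i * P * (E i)ᴴ * (R j)ᴴ) *ᵥ ψ)
      = (A * ρ).trace + (A * Q).trace := by
    rw [← trace_pair, ← hρdef, sum_pair E R P ρ, ← hAdef]
    conv_lhs => rw [hPdec]
    rw [mul_add, Matrix.trace_add]
  rw [hmain, Complex.add_re]
  linarith
end

section
/- Example channel, transpose-channel fidelity loss (Example 5): Fix d ≥ 2 and p ∈ [0,1). On ℂ^d consider the TP Kraus family E_0 := √(1−p) • 1 and E_k := √p • (e_0 e_{k−1}ᴴ) for k = 1, …, d. Here E(1) = (1−p) • 1 + (p·d) • (e_0 e_0ᴴ) is positive definite, and S := (sqrt(E(1)))⁻¹ is its inverse square root. Then the squared fidelity of the basis state e_0 under the transpose channel composed with the noise satisfies ∑_{i,j} |⟨e_0, E_iᴴ S E_j e_0⟩|² = 1 / (1 + (d−1)·p); consequently the transpose-channel fidelity loss satisfies η_P ≥ (d−1)·p / (1 + (d−1)·p). -/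
open Matrix
open scoped ComplexOrder

section ExampleChannelAux
variable {d : ℕ}

lemma myStdH (i j : Fin d) (c : ℂ) :
    (Matrix.single i j c)ᴴ = Matrix.single j i (star c) := by
  ext a b
  simp only [Matrix.conjTranspose_apply, Matrix.single, Matrix.of_apply, apply_ite star,
    star_zero, and_comm]

lemma myEntry (z : Fin d) (M : Matrix (Fin d) (Fin d) ℂ) :
    star (Pi.single z (1:ℂ)) ⬝ᵥ (M *ᵥ Pi.single z 1) = M z z := by
  simp [Matrix.mulVec_single, dotProduct, Pi.single_apply, apply_ite, Finset.sum_ite_eq]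

lemma part1 (p : ℝ) (hp0 : 0 ≤ p) (hp1 : p < 1) (z : Fin d)
    (E : Fin (d + 1) → Matrix (Fin d) (Fin d) ℂ)
    (hE0 : E 0 = (Real.sqrt (1 - p) : ℂ) • (1 : Matrix (Fin d) (Fin d) ℂ))
    (hEk : ∀ k : Fin d, E k.succ = (Real.sqrt p : ℂ) • Matrix.single z k 1) :
    ∑ k, E k * (1 : Matrix (Fin d) (Fin d) ℂ) * (E k)ᴴ
      = ((1 - p : ℝ) : ℂ) • (1 : Matrix (Fin d) (Fin d) ℂ)
        + ((p * d : ℝ) : ℂ) • Matrix.single z z 1 := by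
  have hq0 : (0:ℝ) ≤ 1 - p := by linarith
  rw [Fin.sum_univ_succ]
  have e0 : E 0 * 1 * (E 0)ᴴ = ((1 - p : ℝ) : ℂ) • (1 : Matrix (Fin d) (Fin d) ℂ) := by
    rw [hE0]
    simp [Matrix.conjTranspose_smul, Complex.star_def, Complex.conj_ofReal, smul_smul,
      ← Complex.ofReal_mul, Real.mul_self_sqrt hq0]
    norm_cast
  have ek : ∀ k : Fin d, E k.succ * 1 * (E k.succ)ᴴ
      = ((p : ℝ) : ℂ) • Matrix.single z z 1 := by
    intro k
    rw [hEk k]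
    simp [Matrix.conjTranspose_smul, myStdH, Complex.star_def, Complex.conj_ofReal, smul_smul,
      Matrix.single_mul_single_same, ← Complex.ofReal_mul, Real.mul_self_sqrt hp0]
  rw [e0]
  congr 1
  simp only [ek, Finset.sum_const, Finset.card_univ, Fintype.card_fin, smul_smul]
  rw [← Nat.cast_smul_eq_nsmul ℂ, smul_smul]
  congr 1
  push_cast
  ring


lemma quadForm (z : Fin d) (a b : ℂ) (x : Fin d → ℂ) :
    star x ⬝ᵥ ((a • (1 : Matrix (Fin d) (Fin d) ℂ) + b • Matrix.single z z 1) *ᵥ x)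
      = a * (star x ⬝ᵥ x) + b * (star (x z) * x z) := by
  rw [Matrix.add_mulVec, Matrix.smul_mulVec, Matrix.smul_mulVec,
    Matrix.single_mulVec, Matrix.one_mulVec, dotProduct_add, dotProduct_smul,
    dotProduct_smul]
  congr 1
  simp [dotProduct, Function.update_apply, mul_ite, Finset.sum_ite_eq, mul_comm]

lemma hermComb (z : Fin d) (x y : ℝ) :
    (((x : ℂ) • (1 : Matrix (Fin d) (Fin d) ℂ) + (y : ℂ) • Matrix.single z z 1)).IsHermitian := by
  unfold Matrix.IsHermitian
  simp [Matrix.conjTranspose_add, Matrix.conjTranspose_smul, myStdH, Complex.star_def,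
    Complex.conj_ofReal]

lemma part2 (p : ℝ) (hp0 : 0 ≤ p) (hp1 : p < 1) (z : Fin d) :
    (((1 - p : ℝ) : ℂ) • (1 : Matrix (Fin d) (Fin d) ℂ)
      + ((p * d : ℝ) : ℂ) • Matrix.single z z 1).PosDef := by
  refine Matrix.PosDef.of_dotProduct_mulVec_pos (hermComb z _ _) (fun x hx => ?_)
  rw [quadForm]
  refine add_pos_of_pos_of_nonneg (mul_pos ?_ (dotProduct_star_self_pos_iff.mpr hx))
    (mul_nonneg ?_ (star_mul_self_nonneg _))
  · exact_mod_cast (by linarith : (0:ℝ) < 1 - p)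
  · exact_mod_cast mul_nonneg hp0 (Nat.cast_nonneg d)
lemma mulComb (z : Fin d) (x y u v : ℂ) :
    (x • (1 : Matrix (Fin d) (Fin d) ℂ) + y • Matrix.single z z 1)
      * (u • 1 + v • Matrix.single z z 1)
    = (x * u) • 1 + (x * v + y * u + y * v) • Matrix.single z z 1 := by
  simp only [add_mul, mul_add, Matrix.smul_mul, Matrix.mul_smul, one_mul, mul_one,
    Matrix.one_mul, Matrix.mul_one, Matrix.single_mul_single_same, smul_smul, add_smul]
  module

lemma part3 (p : ℝ) (hp0 : 0 ≤ p) (hp1 : p < 1) (z : Fin d)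
    (T S : Matrix (Fin d) (Fin d) ℂ) (hT : T.PosSemidef)
    (hTsq : T * T = ((1 - p : ℝ) : ℂ) • (1 : Matrix (Fin d) (Fin d) ℂ)
      + ((p * d : ℝ) : ℂ) • Matrix.single z z 1)
    (hS : S = T⁻¹) :
    S = ((1 / Real.sqrt (1 - p) : ℝ) : ℂ) • (1 : Matrix (Fin d) (Fin d) ℂ)
      + ((1 / Real.sqrt (1 + ((d : ℝ) - 1) * p) - 1 / Real.sqrt (1 - p) : ℝ) : ℂ)
          • Matrix.single z z 1 := by
  have hq0 : (0:ℝ) < 1 - p := by linarith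
  have hlam0 : (0:ℝ) < 1 + ((d : ℝ) - 1) * p := by nlinarith [Nat.cast_nonneg (α := ℝ) d]
  set a := Real.sqrt (1 - p) with ha
  set c := Real.sqrt (1 + ((d : ℝ) - 1) * p) with hc
  have ha2 : a * a = 1 - p := Real.mul_self_sqrt hq0.le
  have hc2 : c * c = 1 + ((d : ℝ) - 1) * p := Real.mul_self_sqrt hlam0.le
  have hapos : 0 < a := Real.sqrt_pos.mpr hq0
  have hcpos : 0 < c := Real.sqrt_pos.mpr hlam0
  have hac : a ≤ c := Real.sqrt_le_sqrt (by nlinarith [Nat.cast_nonneg (α := ℝ) d])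
  have haC : (a : ℂ) ≠ 0 := by exact_mod_cast hapos.ne'
  have hcC : (c : ℂ) ≠ 0 := by exact_mod_cast hcpos.ne'
  set D : Matrix (Fin d) (Fin d) ℂ :=
    (a : ℂ) • 1 + ((c - a : ℝ) : ℂ) • Matrix.single z z 1 with hD
  have ha2' : (a:ℂ) * a = 1 - (p:ℂ) := by exact_mod_cast congrArg Complex.ofReal ha2
  have hc2' : (c:ℂ) * c = 1 + ((d:ℂ) - 1) * (p:ℂ) := by exact_mod_cast congrArg Complex.ofReal hc2
  have hD2 : D * D = T * T := by
    rw [hD, mulComb, hTsq]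
    congr 1
    · congr 1
      rw [← Complex.ofReal_mul, ha2]
    · congr 1
      push_cast
      linear_combination hc2' - ha2'
  have hDpsd : D.PosSemidef := by
    refine Matrix.PosSemidef.of_dotProduct_mulVec_nonneg (hermComb z _ _) (fun x => ?_)
    rw [hD, quadForm]
    refine add_nonneg (mul_nonneg ?_ (dotProduct_star_self_nonneg x))
      (mul_nonneg ?_ (star_mul_self_nonneg _))
    · exact_mod_cast hapos.le
    · exact_mod_cast (by linarith : (0:ℝ) ≤ c - a)
  have hTD : T = D := by
    open scoped MatrixOrder in
    exact (CFC.sq_eq_sq_iff T D hT.nonneg hDpsd.nonneg).mp (by rw [pow_two, pow_two, hD2])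
  have hDF : D * (((1 / a : ℝ) : ℂ) • (1 : Matrix (Fin d) (Fin d) ℂ)
      + ((1 / c - 1 / a : ℝ) : ℂ) • Matrix.single z z 1) = 1 := by
    rw [hD, mulComb]
    have h1 : (a:ℂ) * ((1 / a : ℝ) : ℂ) = 1 := by push_cast; field_simp
    have h2 : (a:ℂ) * ((1 / c - 1 / a : ℝ) : ℂ) + ((c - a : ℝ) : ℂ) * ((1 / a : ℝ) : ℂ)
        + ((c - a : ℝ) : ℂ) * ((1 / c - 1 / a : ℝ) : ℂ) = 0 := by
      push_cast
      field_simp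
      ring
    rw [h1, h2]
    simp
  rw [hS, hTD, Matrix.inv_eq_right_inv hDF]
lemma part4 (hd : 2 ≤ d) (p : ℝ) (hp0 : 0 ≤ p) (hp1 : p < 1) (z : Fin d)
    (E : Fin (d + 1) → Matrix (Fin d) (Fin d) ℂ)
    (hE0 : E 0 = (Real.sqrt (1 - p) : ℂ) • (1 : Matrix (Fin d) (Fin d) ℂ))
    (hEk : ∀ k : Fin d, E k.succ = (Real.sqrt p : ℂ) • Matrix.single z k 1)
    (S : Matrix (Fin d) (Fin d) ℂ)
    (hSF : S = ((1 / Real.sqrt (1 - p) : ℝ) : ℂ) • (1 : Matrix (Fin d) (Fin d) ℂ)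
      + ((1 / Real.sqrt (1 + ((d : ℝ) - 1) * p) - 1 / Real.sqrt (1 - p) : ℝ) : ℂ)
          • Matrix.single z z 1) :
    ∑ i, ∑ j, ‖
        (star (Pi.single z (1 : ℂ)) ⬝ᵥ (((E i)ᴴ * S * E j) *ᵥ Pi.single z 1))‖ ^ 2
      = 1 / (1 + ((d : ℝ) - 1) * p) := by
  have hq0 : (0:ℝ) < 1 - p := by linarith
  have hlam0 : (0:ℝ) < 1 + ((d : ℝ) - 1) * p := by nlinarith [Nat.cast_nonneg (α := ℝ) d]
  set a := Real.sqrt (1 - p) with ha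
  set c := Real.sqrt (1 + ((d : ℝ) - 1) * p) with hc
  set sp := Real.sqrt p with hsp
  have ha2 : a * a = 1 - p := Real.mul_self_sqrt hq0.le
  have hc2 : c * c = 1 + ((d : ℝ) - 1) * p := Real.mul_self_sqrt hlam0.le
  have hsp2 : sp * sp = p := Real.mul_self_sqrt hp0
  have hapos : 0 < a := Real.sqrt_pos.mpr hq0
  have hcpos : 0 < c := Real.sqrt_pos.mpr hlam0
  -- conjugate transposes of the Kraus operators
  have hE0H : (E 0)ᴴ = (a : ℂ) • 1 := by
    rw [hE0]
    simp [Matrix.conjTranspose_smul, Complex.star_def, Complex.conj_ofReal]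
  have hEkH : ∀ k : Fin d, (E k.succ)ᴴ = (sp : ℂ) • Matrix.single k z 1 := by
    intro k
    rw [hEk k]
    simp [Matrix.conjTranspose_smul, myStdH, Complex.star_def, Complex.conj_ofReal]
  have ha2' : (a:ℂ) * a = 1 - (p:ℂ) := by exact_mod_cast congrArg Complex.ofReal ha2
  have hsp2' : (sp:ℂ) * sp = (p:ℂ) := by exact_mod_cast congrArg Complex.ofReal hsp2
  have hFB : ∀ l : Fin d, S * Matrix.single z l 1
      = ((1 / c : ℝ) : ℂ) • Matrix.single z l 1 := by
    intro l
    rw [hSF, add_mul, Matrix.smul_mul, Matrix.one_mul, Matrix.smul_mul,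
      Matrix.single_mul_single_same, mul_one, ← add_smul]
    congr 1
    push_cast
    ring
  have hBF : ∀ k : Fin d, Matrix.single k z 1 * S
      = ((1 / c : ℝ) : ℂ) • Matrix.single k z 1 := by
    intro k
    rw [hSF, mul_add, Matrix.mul_smul, Matrix.mul_one, Matrix.mul_smul,
      Matrix.single_mul_single_same, mul_one, ← add_smul]
    congr 1
    push_cast
    ring
  have hSzz : S z z = ((1 / c : ℝ) : ℂ) := by
    rw [hSF]
    simp only [Matrix.add_apply, Matrix.smul_apply, Matrix.one_apply_eq,
      Matrix.single_apply_same, smul_eq_mul, mul_one]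
    push_cast
    ring
  -- the four entry computations
  have hM00 : ((E 0)ᴴ * S * E 0) z z = (((1 - p) * (1 / c) : ℝ) : ℂ) := by
    rw [hE0H, hE0]
    simp only [Matrix.smul_mul, Matrix.mul_smul, Matrix.one_mul, Matrix.mul_one, smul_smul,
      Matrix.smul_apply, hSzz, smul_eq_mul]
    push_cast
    linear_combination (1 / (c:ℂ)) * ha2'
  have hM0k : ∀ l : Fin d, ((E 0)ᴴ * S * E l.succ) z z
      = if l = z then (((a * sp) * (1 / c) : ℝ) : ℂ) else 0 := by
    intro l
    rw [hE0H, hEk l]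
    simp only [Matrix.smul_mul, Matrix.mul_smul, Matrix.one_mul]
    rw [hFB l]
    simp only [smul_smul, Matrix.smul_apply, Matrix.single, Matrix.of_apply, smul_eq_mul]
    by_cases h : l = z <;> simp [h] <;> push_cast <;> ring
  have hMk0 : ∀ k : Fin d, ((E k.succ)ᴴ * S * E 0) z z
      = if k = z then (((sp * a) * (1 / c) : ℝ) : ℂ) else 0 := by
    intro k
    rw [hEkH k, hE0]
    simp only [Matrix.smul_mul, Matrix.mul_smul, Matrix.mul_one]
    rw [hBF k]
    simp only [smul_smul, Matrix.smul_apply, Matrix.single, Matrix.of_apply, smul_eq_mul]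
    by_cases h : k = z <;> simp [h] <;> push_cast <;> ring
  have hMkl : ∀ k l : Fin d, ((E k.succ)ᴴ * S * E l.succ) z z
      = if k = z ∧ l = z then ((p * (1 / c) : ℝ) : ℂ) else 0 := by
    intro k l
    rw [hEkH k, hEk l]
    simp only [Matrix.smul_mul, Matrix.mul_smul]
    rw [hBF k]
    simp only [Matrix.smul_mul, Matrix.single_mul_single_same, mul_one, smul_smul]
    simp only [Matrix.smul_apply, Matrix.single, Matrix.of_apply, smul_eq_mul]
    by_cases h1 : k = z <;> by_cases h2 : l = z <;> simp [h1, h2]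
    push_cast
    linear_combination (1 / (c:ℂ)) * hsp2'
  -- assemble the double sum
  have habs : ∀ (cnd : Prop) [Decidable cnd] (w : ℂ),
      ‖(if cnd then w else 0)‖ ^ 2 = if cnd then ‖w‖ ^ 2 else 0 := by
    intros cnd _ w
    split <;> simp
  simp only [myEntry]
  rw [Fin.sum_univ_succ]
  rw [Fin.sum_univ_succ (f := fun j => ‖(((E 0)ᴴ * S * E j) z z)‖ ^ 2)]
  simp only [Fin.sum_univ_succ (n := d)]
  simp only [hM00, hM0k, hMk0, hMkl, habs, ite_and, Finset.sum_add_distrib,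
    Finset.sum_ite_irrel, Finset.sum_const_zero, Finset.sum_ite_eq', Finset.mem_univ, if_true]
  simp only [Complex.norm_real, Real.norm_eq_abs, sq_abs]
  have ha2sq : a ^ 2 = 1 - p := by rw [pow_two, ha2]
  have hsp2sq : sp ^ 2 = p := by rw [pow_two, hsp2]
  have hc2sq : c ^ 2 = 1 + ((d : ℝ) - 1) * p := by rw [pow_two, hc2]
  rw [← hc2sq]
  have hcne : c ≠ 0 := hcpos.ne'
  field_simp
  nlinarith [ha2sq, hsp2sq]

lemma part5 (hd : 2 ≤ d) (p : ℝ) (hp0 : 0 ≤ p) (hp1 : p < 1) (z : Fin d)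
    (E : Fin (d + 1) → Matrix (Fin d) (Fin d) ℂ)
    (S : Matrix (Fin d) (Fin d) ℂ)
    (h4 : ∑ i, ∑ j, ‖
        (star (Pi.single z (1 : ℂ)) ⬝ᵥ (((E i)ᴴ * S * E j) *ᵥ Pi.single z 1))‖ ^ 2
      = 1 / (1 + ((d : ℝ) - 1) * p)) :
    ((d : ℝ) - 1) * p / (1 + ((d : ℝ) - 1) * p)
      ≤ 1 - sInf {r : ℝ | ∃ ψ : Fin d → ℂ, star ψ ⬝ᵥ ψ = 1 ∧
          r = ∑ i, ∑ j, ‖(star ψ ⬝ᵥ (((E i)ᴴ * S * E j) *ᵥ ψ))‖ ^ 2} := by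
  have hd1 : (1:ℝ) ≤ (d:ℝ) := by have h : 1 ≤ d := by omega
                                 exact_mod_cast h
  have hlam0 : (0:ℝ) < 1 + ((d : ℝ) - 1) * p := by nlinarith
  set Q : Set ℝ := {r : ℝ | ∃ ψ : Fin d → ℂ, star ψ ⬝ᵥ ψ = 1 ∧
      r = ∑ i, ∑ j, ‖(star ψ ⬝ᵥ (((E i)ᴴ * S * E j) *ᵥ ψ))‖ ^ 2} with hQ
  have hunit : star (Pi.single z (1:ℂ)) ⬝ᵥ Pi.single z 1 = 1 := by
    simp [dotProduct, Pi.single_apply, apply_ite, Finset.sum_ite_eq]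
  have hmem : 1 / (1 + ((d : ℝ) - 1) * p) ∈ Q :=
    ⟨Pi.single z 1, hunit, h4.symm⟩
  have hbdd : BddBelow Q := by
    refine ⟨0, fun r hr => ?_⟩
    obtain ⟨ψ, -, rfl⟩ := hr
    positivity
  have hle : sInf Q ≤ 1 / (1 + ((d : ℝ) - 1) * p) := csInf_le hbdd hmem
  have hkey : ((d : ℝ) - 1) * p / (1 + ((d : ℝ) - 1) * p)
      = 1 - 1 / (1 + ((d : ℝ) - 1) * p) := by
    field_simp
    ring
  rw [hkey]
  linarith

end ExampleChannelAux

/-- Example channel, transpose-channel fidelity loss (Example 5): for the channel on `ℂ^d`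
with Kraus operators `E_0 = √(1−p) • 1` and `E_k = √p • |0⟩⟨k−1|` (`k = 1, …, d`, `p < 1`),
`E(1) = (1−p) • 1 + (p·d) • |0⟩⟨0|` is positive definite, the squared fidelity of the basis
state `e₀` under the transpose channel (with `S = E(1)^{-1/2}`) composed with the noise is
`1/(1+(d−1)p)`, and hence the transpose-channel fidelity loss satisfies
`η_P ≥ (d−1)p/(1+(d−1)p)`. -/
theorem example_channel_transpose_recovery
    {d : ℕ} (hd : 2 ≤ d) (p : ℝ) (hp0 : 0 ≤ p) (hp1 : p < 1)
    (E : Fin (d + 1) → Matrix (Fin d) (Fin d) ℂ)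
    (hE0 : E 0 = (Real.sqrt (1 - p) : ℂ) • (1 : Matrix (Fin d) (Fin d) ℂ))
    (hEk : ∀ k : Fin d, E k.succ
      = (Real.sqrt p : ℂ) • Matrix.single (⟨0, by omega⟩ : Fin d) k 1)
    (T S : Matrix (Fin d) (Fin d) ℂ)
    (hT : T.PosSemidef) (hTsq : T * T = ∑ k, E k * (1 : Matrix (Fin d) (Fin d) ℂ) * (E k)ᴴ)
    (hS : S = T⁻¹) :
    (∑ k, E k * (1 : Matrix (Fin d) (Fin d) ℂ) * (E k)ᴴ
        = ((1 - p : ℝ) : ℂ) • (1 : Matrix (Fin d) (Fin d) ℂ)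
          + ((p * d : ℝ) : ℂ) •
              Matrix.single (⟨0, by omega⟩ : Fin d) (⟨0, by omega⟩ : Fin d) 1) ∧
    (∑ k, E k * (1 : Matrix (Fin d) (Fin d) ℂ) * (E k)ᴴ).PosDef ∧
    (∑ i, ∑ j, ‖
        (star (Pi.single (⟨0, by omega⟩ : Fin d) (1 : ℂ)) ⬝ᵥ
          (((E i)ᴴ * S * E j) *ᵥ Pi.single (⟨0, by omega⟩ : Fin d) (1 : ℂ)))‖ ^ 2
      = 1 / (1 + ((d : ℝ) - 1) * p)) ∧
    ((d : ℝ) - 1) * p / (1 + ((d : ℝ) - 1) * p)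
      ≤ 1 - sInf {r : ℝ | ∃ ψ : Fin d → ℂ, star ψ ⬝ᵥ ψ = 1 ∧
          r = ∑ i, ∑ j, ‖(star ψ ⬝ᵥ (((E i)ᴴ * S * E j) *ᵥ ψ))‖ ^ 2} := by
  have hz : (0:ℕ) < d := by omega
  set z : Fin d := ⟨0, hz⟩ with hzdef
  have hEk' : ∀ k : Fin d, E k.succ = (Real.sqrt p : ℂ) • Matrix.single z k 1 :=
    fun k => hEk k
  have h1 := part1 p hp0 hp1 z E hE0 hEk'
  have h2 := part2 p hp0 hp1 z
  have h3 := part3 p hp0 hp1 z T S hT (by rw [hTsq, h1]) hS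
  have h4 := part4 hd p hp0 hp1 z E hE0 hEk' S h3
  have h5 := part5 hd p hp0 hp1 z E S h4
  exact ⟨h1, by rw [h1]; exact h2, h4, h5⟩
end

section
/- Alternate form of the perfect QEC conditions, forward direction (Theorem 6, Eq. 15): Under the diagonal perfect QEC conditions (P F_kᴴ F_l P = (if k = l then d_k else 0) • P with d_k > 0, and F_k P = (√d_k) • (U_k P) with U_k unitary), set P_k := U_k P U_kᴴ and S := ∑_{k∈K} (d_k)^{-1/2} • P_k (which is E(P)^{-1/2} for E(P) := ∑_k F_k P F_kᴴ). Then for all k, l ∈ K: P F_kᴴ S F_l P = (if k = l then √d_k else 0) • P. -/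
open Matrix

/-- Alternate form of the perfect QEC conditions, forward direction (Theorem 6, Eq. 15):
under the diagonal perfect QEC conditions, with `P_k := U_k P U_kᴴ` and
`S := ∑_k (d_k)^{-1/2} • P_k` (which is `E(P)^{-1/2}`), one has
`P F_kᴴ S F_l P = δ_{kl} √d_k • P`. -/
theorem alternate_QEC_conditions_forward
    {n : ℕ} {K : Type*} [Fintype K] [DecidableEq K]
    (F : K → Matrix (Fin n) (Fin n) ℂ) (U : K → Matrix (Fin n) (Fin n) ℂ)
    (P : Matrix (Fin n) (Fin n) ℂ) (d : K → ℝ)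
    (hP1 : P * P = P) (hP2 : Pᴴ = P) (hP0 : P ≠ 0)
    (hd : ∀ k, 0 < d k)
    (hQEC : ∀ k l, P * (F k)ᴴ * F l * P = (if k = l then (d k : ℂ) else 0) • P)
    (hU : ∀ k, U k * (U k)ᴴ = 1 ∧ (U k)ᴴ * U k = 1)
    (hpolar : ∀ k, F k * P = (Real.sqrt (d k) : ℂ) • (U k * P)) :
    ∀ k l, P * (F k)ᴴ *
        (∑ m, (((Real.sqrt (d m))⁻¹ : ℝ) : ℂ) • (U m * P * (U m)ᴴ)) * F l * P
      = (if k = l then (Real.sqrt (d k) : ℂ) else 0) • P := by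
  have hsq : ∀ a, (Real.sqrt (d a) : ℝ) ≠ 0 := fun a =>
    ne_of_gt (Real.sqrt_pos.mpr (hd a))
  have hpolar' : ∀ a, P * (F a)ᴴ = (Real.sqrt (d a) : ℂ) • (P * (U a)ᴴ) := by
    intro a
    have h := congrArg conjTranspose (hpolar a)
    simpa [conjTranspose_mul, conjTranspose_smul, hP2, Complex.star_def,
      Complex.conj_ofReal] using h
  have hkey : ∀ a b, P * (U a)ᴴ * (U b * P) = (if a = b then (1 : ℂ) else 0) • P := by
    intro a b
    have h1 : P * (F a)ᴴ * (F b * P) = (if a = b then (d a : ℂ) else 0) • P := by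
      rw [← Matrix.mul_assoc]; exact hQEC a b
    have h2 : P * (F a)ᴴ * (F b * P)
        = ((Real.sqrt (d a) * Real.sqrt (d b) : ℝ) : ℂ) •
          (P * (U a)ᴴ * (U b * P)) := by
      rw [hpolar' a, hpolar b]
      simp only [smul_mul_assoc, mul_smul_comm, smul_smul]
      push_cast
      ring_nf
    rw [h2] at h1
    have hne : ((Real.sqrt (d a) * Real.sqrt (d b) : ℝ) : ℂ) ≠ 0 := by
      exact_mod_cast mul_ne_zero (hsq a) (hsq b)
    have h3 := congrArg (fun X => (((Real.sqrt (d a) * Real.sqrt (d b) : ℝ) : ℂ))⁻¹ • X) h1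
    simp only [smul_smul, inv_mul_cancel₀ hne, one_smul] at h3
    rw [h3]
    congr 1
    by_cases hab : a = b
    · subst hab
      simp only [if_pos rfl]
      have : (Real.sqrt (d a) * Real.sqrt (d a) : ℝ) = d a :=
        Real.mul_self_sqrt (le_of_lt (hd a))
      rw [this]
      exact inv_mul_cancel₀ (by exact_mod_cast ne_of_gt (hd a))
    · simp [hab]
  have hkey' : ∀ a b, P * ((U a)ᴴ * (U b * P)) = (if a = b then (1 : ℂ) else 0) • P := by
    intro a b
    have := hkey a b
    simpa [Matrix.mul_assoc] using this
  intro k l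
  rw [Matrix.mul_sum, Matrix.sum_mul, Matrix.sum_mul]
  have hterm : ∀ m : K,
      P * (F k)ᴴ * ((((Real.sqrt (d m))⁻¹ : ℝ) : ℂ) • (U m * P * (U m)ᴴ)) * F l * P
        = (if k = m then if m = l then (Real.sqrt (d k) : ℂ) else 0 else 0) • P := by
    intro m
    rw [hpolar' k, Matrix.mul_assoc _ (F l) P, hpolar l]
    simp only [smul_mul_assoc, mul_smul_comm, smul_smul]
    have hmm : U m * P * (U m)ᴴ = U m * P * (P * (U m)ᴴ) := by
      rw [← Matrix.mul_assoc, Matrix.mul_assoc (U m) P P, hP1]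
    rw [hmm]
    simp only [Matrix.mul_assoc]
    rw [hkey' m l]
    simp only [mul_smul_comm, smul_smul]
    rw [hP1, hkey' k m]
    simp only [smul_smul]
    congr 1
    by_cases hkm : k = m
    · subst hkm
      by_cases hkl : k = l
      · subst hkl
        simp only [if_pos rfl]
        push_cast
        field_simp
      · simp [hkl]
    · simp [hkm]
  calc (∑ m, P * (F k)ᴴ * ((((Real.sqrt (d m))⁻¹ : ℝ) : ℂ) • (U m * P * (U m)ᴴ)) * F l * P)
      = ∑ m, (if k = m then if m = l then (Real.sqrt (d k) : ℂ) else 0 else 0) • P :=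
        Finset.sum_congr rfl fun m _ => hterm m
    _ = (if k = l then (Real.sqrt (d k) : ℂ) else 0) • P := by
        rw [← Finset.sum_smul]
        congr 1
        simp [Finset.sum_ite_eq]
end

section
/- Alternate form of the perfect QEC conditions, converse direction (Theorem 6): Let {F_k}_{k∈K} be a finite Kraus family on ℂⁿ, P a nonzero orthogonal projection, E(P) := ∑_k F_k P F_kᴴ, T the positive semidefinite square root of E(P), and S the Moore–Penrose pseudoinverse of T. Suppose there are reals d_k > 0 such that P F_kᴴ S F_l P = (if k = l then √d_k else 0) • P for all k, l ∈ K. Then P F_kᴴ F_l P = (if k = l then d_k else 0) • P for all k, l ∈ K; i.e., the code satisfies the perfect QEC conditions in diagonal form. -/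
open Matrix
open scoped ComplexOrder

/-- Alternate form of the perfect QEC conditions, converse direction (Theorem 6): if the
Kraus operators of the transpose channel composed with the noise satisfy
`P F_kᴴ S F_l P = δ_{kl} √d_k • P` with `d_k > 0`, where `T = sqrt(E(P))` and `S` is its
Moore–Penrose pseudoinverse, then the code satisfies the perfect QEC conditions in
diagonal form: `P F_kᴴ F_l P = δ_{kl} d_k • P`. -/
theorem alternate_QEC_conditions_converse
    {n : ℕ} {K : Type*} [Fintype K] [DecidableEq K]
    (F : K → Matrix (Fin n) (Fin n) ℂ)
    (P T S : Matrix (Fin n) (Fin n) ℂ) (d : K → ℝ)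
    (hP1 : P * P = P) (hP2 : Pᴴ = P) (hP0 : P ≠ 0)
    (hT : T.PosSemidef) (hTsq : T * T = ∑ k, F k * P * (F k)ᴴ)
    (hS : S.PosSemidef) (hSTS : S * T * S = S) (hTST : T * S * T = T)
    (hcomm : S * T = T * S)
    (hd : ∀ k, 0 < d k)
    (halt : ∀ k l, P * (F k)ᴴ * S * F l * P
      = (if k = l then (Real.sqrt (d k) : ℂ) else 0) • P) :
    ∀ k l, P * (F k)ᴴ * F l * P = (if k = l then (d k : ℂ) else 0) • P := by
  intro k l
  set A : Matrix (Fin n) (Fin n) ℂ := 1 - T * S with hA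
  have hAT : A * T = 0 := by
    rw [hA, sub_mul, one_mul, mul_assoc, ← mul_assoc T S T, hTST, sub_self]
  have hAH : Aᴴ = A := by
    simp only [hA, conjTranspose_sub, conjTranspose_one, conjTranspose_mul,
      hS.1.eq, hT.1.eq, hcomm]
  have hsum : ∑ m, (A * (F m * P)) * (A * (F m * P))ᴴ = 0 := by
    have heach : ∀ m : K, (A * (F m * P)) * (A * (F m * P))ᴴ
        = A * (F m * P * (F m)ᴴ) * Aᴴ := by
      intro m
      rw [conjTranspose_mul, conjTranspose_mul, hP2]
      nth_rewrite 3 [← hP1]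
      noncomm_ring
    calc ∑ m, (A * (F m * P)) * (A * (F m * P))ᴴ
        = ∑ m, A * (F m * P * (F m)ᴴ) * Aᴴ := Finset.sum_congr rfl fun m _ => heach m
      _ = A * (T * T) * Aᴴ := by rw [hTsq, Finset.mul_sum, Finset.sum_mul]
      _ = 0 := by rw [← mul_assoc, hAT, zero_mul, zero_mul]
  have hkey : ∀ m, T * S * (F m * P) = F m * P := by
    intro m
    have hz : A * (F m * P) = 0 := by
      have hentry : ∀ i j, (A * (F m * P)) i j = 0 := by
        intro i j
        have h0 : ∑ m' ∈ Finset.univ,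
            (((A * (F m' * P)) * (A * (F m' * P))ᴴ) i i) = 0 := by
          have := congrFun (congrFun hsum i) i
          simpa [Matrix.sum_apply] using this
        have hnn : ∀ m' ∈ Finset.univ,
            (0 : ℂ) ≤ ((A * (F m' * P)) * (A * (F m' * P))ᴴ) i i := by
          intro m' _
          rw [Matrix.mul_apply]
          refine Finset.sum_nonneg fun j' _ => ?_
          simpa [Matrix.conjTranspose_apply] using
            mul_star_self_nonneg ((A * (F m' * P)) i j')
        have h1 : ((A * (F m * P)) * (A * (F m * P))ᴴ) i i = 0 :=
          (Finset.sum_eq_zero_iff_of_nonneg hnn).1 h0 m (Finset.mem_univ m)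
        rw [Matrix.mul_apply] at h1
        have hnn2 : ∀ j' ∈ Finset.univ,
            (0 : ℂ) ≤ (A * (F m * P)) i j' * (A * (F m * P))ᴴ j' i := by
          intro j' _
          simpa [Matrix.conjTranspose_apply] using
            mul_star_self_nonneg ((A * (F m * P)) i j')
        have h2 : (A * (F m * P)) i j * (A * (F m * P))ᴴ j i = 0 :=
          (Finset.sum_eq_zero_iff_of_nonneg hnn2).1 h1 j (Finset.mem_univ j)
        rw [Matrix.conjTranspose_apply, RCLike.star_def, Complex.mul_conj] at h2
        exact_mod_cast Complex.normSq_eq_zero.mp (by exact_mod_cast h2)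
      exact Matrix.ext hentry
    have h := hz
    rw [hA, sub_mul, one_mul, sub_eq_zero] at h
    exact h.symm
  have hkeyH : P * (F k)ᴴ * S * T = P * (F k)ᴴ := by
    have h := congrArg conjTranspose (hkey k)
    simp only [conjTranspose_mul, hP2, hT.1.eq, hS.1.eq, ← mul_assoc] at h
    exact h
  have hmain : P * (F k)ᴴ * F l * P
      = P * (F k)ᴴ * S * (T * T) * S * (F l * P) := by
    calc P * (F k)ᴴ * F l * P
        = (P * (F k)ᴴ * S * T) * (T * S * (F l * P)) := by
          rw [hkeyH, hkey l]; noncomm_ring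
      _ = P * (F k)ᴴ * S * (T * T) * S * (F l * P) := by noncomm_ring
  rw [hmain, hTsq, Finset.mul_sum, Finset.sum_mul, Finset.sum_mul]
  have hterm : ∀ m, P * (F k)ᴴ * S * (F m * P * (F m)ᴴ) * S * (F l * P)
      = (P * (F k)ᴴ * S * F m * P) * (P * (F m)ᴴ * S * F l * P) := by
    intro m
    calc P * (F k)ᴴ * S * (F m * P * (F m)ᴴ) * S * (F l * P)
        = P * (F k)ᴴ * S * (F m * (P * P) * (F m)ᴴ) * S * (F l * P) := by rw [hP1]
      _ = (P * (F k)ᴴ * S * F m * P) * (P * (F m)ᴴ * S * F l * P) := by noncomm_ring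
  calc ∑ m, P * (F k)ᴴ * S * (F m * P * (F m)ᴴ) * S * (F l * P)
      = ∑ m, (P * (F k)ᴴ * S * F m * P) * (P * (F m)ᴴ * S * F l * P) :=
        Finset.sum_congr rfl fun m _ => hterm m
    _ = ∑ m, ((if k = m then (Real.sqrt (d k) : ℂ) else 0) • P)
          * ((if m = l then (Real.sqrt (d m) : ℂ) else 0) • P) := by
        simp_rw [halt]
    _ = (if k = l then (d k : ℂ) else 0) • P := by
        rw [Finset.sum_eq_single l]
        · by_cases h : k = l
          · subst h
            simp only [if_pos rfl, if_true, smul_mul_smul_comm, hP1,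
              ← Complex.ofReal_mul, Real.mul_self_sqrt (hd k).le]
          · simp [h]
        · intro m _ hm
          simp [hm]
        · intro h
          exact absurd (Finset.mem_univ l) h
end

section
/- The transpose channel composed with the noise is trace preserving and unital on the code: Let {E_i}_{i∈I} be a TP Kraus family on ℂⁿ, P an orthogonal projection, T the positive semidefinite square root of E(P) := ∑_i E_i P E_iᴴ, and S the Moore–Penrose pseudoinverse of T. Define A_{ij} := P E_iᴴ S E_j P for i, j ∈ I. Then ∑_{i,j∈I} A_{ij}ᴴ A_{ij} = P and ∑_{i,j∈I} A_{ij} A_{ij}ᴴ = P. -/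
open Matrix
open scoped ComplexOrder

lemma sum_mul_conjTranspose_self_eq_zero' {n : ℕ} {I : Type*} [Fintype I]
    (M : I → Matrix (Fin n) (Fin n) ℂ)
    (h : ∑ j, M j * (M j)ᴴ = 0) : ∀ j, M j = 0 := by
  have h0 : ∑ j, Matrix.trace (M j * (M j)ᴴ) = 0 := by
    rw [← Matrix.trace_sum, h, Matrix.trace_zero]
  have h1 : ∑ j, ∑ k, ∑ l, Complex.normSq (M j k l) = 0 := by
    simp only [Matrix.trace, Matrix.diag, Matrix.mul_apply, Matrix.conjTranspose_apply,
      Complex.star_def, Complex.mul_conj] at h0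
    exact_mod_cast h0
  have h2 : ∀ j, ∑ k, ∑ l, Complex.normSq (M j k l) = 0 := fun j =>
    (Finset.sum_eq_zero_iff_of_nonneg (fun j _ =>
      Finset.sum_nonneg fun k _ => Finset.sum_nonneg fun l _ => Complex.normSq_nonneg _)).mp
      h1 j (Finset.mem_univ j)
  intro j
  ext k l
  have h3 := (Finset.sum_eq_zero_iff_of_nonneg (fun k _ =>
    Finset.sum_nonneg fun l _ => Complex.normSq_nonneg _)).mp (h2 j) k (Finset.mem_univ k)
  have h4 := (Finset.sum_eq_zero_iff_of_nonneg (fun l _ =>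
    Complex.normSq_nonneg _)).mp h3 l (Finset.mem_univ l)
  simpa using Complex.normSq_eq_zero.mp h4

/-- The transpose channel composed with the noise is trace preserving and unital on the
code: with `A_{ij} := P E_iᴴ S E_j P`, where `T = sqrt(E(P))` and `S` is its Moore–Penrose
pseudoinverse, one has `∑_{ij} A_{ij}ᴴ A_{ij} = P` and `∑_{ij} A_{ij} A_{ij}ᴴ = P`. -/
theorem transpose_channel_TP_and_unital
    {n : ℕ} {I : Type*} [Fintype I]
    (E : I → Matrix (Fin n) (Fin n) ℂ)
    (P T S : Matrix (Fin n) (Fin n) ℂ)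
    (hP1 : P * P = P) (hP2 : Pᴴ = P)
    (hTP : ∑ i, (E i)ᴴ * E i = 1)
    (hT : T.PosSemidef) (hTsq : T * T = ∑ i, E i * P * (E i)ᴴ)
    (hS : S.PosSemidef) (hSTS : S * T * S = S) (hTST : T * S * T = T)
    (hcomm : S * T = T * S) :
    (∑ i, ∑ j, (P * (E i)ᴴ * S * E j * P)ᴴ * (P * (E i)ᴴ * S * E j * P) = P) ∧
    (∑ i, ∑ j, (P * (E i)ᴴ * S * E j * P) * (P * (E i)ᴴ * S * E j * P)ᴴ = P) := by
  have hSh : Sᴴ = S := hS.1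
  set Q := T * S with hQdef
  have hPP : ∀ X : Matrix (Fin n) (Fin n) ℂ, P * (P * X) = P * X := fun X => by
    rw [← mul_assoc, hP1]
  have hQherm : Qᴴ = Q := by
    rw [hQdef, conjTranspose_mul, hSh, hT.1.eq, hcomm]
  have hQT : Q * T = T := hTST
  have h1QT : (1 - Q) * T = 0 := by rw [sub_mul, one_mul, hQT, sub_self]
  -- the kernel fact: Q fixes each E j * P
  have hker : ∑ j, ((1 - Q) * (E j * P)) * ((1 - Q) * (E j * P))ᴴ = 0 := by
    have hterm : ∀ j, ((1 - Q) * (E j * P)) * ((1 - Q) * (E j * P))ᴴ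
        = (1 - Q) * (E j * P * (E j)ᴴ) * (1 - Q) := by
      intro j
      simp only [conjTranspose_mul, conjTranspose_sub, conjTranspose_one, hQherm, hP2,
        mul_assoc, hPP]
    rw [Finset.sum_congr rfl fun j _ => hterm j, ← Finset.sum_mul, ← Finset.mul_sum,
      ← hTsq, ← mul_assoc, h1QT, zero_mul, zero_mul]
  have hQE : ∀ j, Q * (E j * P) = E j * P := by
    intro j
    have := sum_mul_conjTranspose_self_eq_zero' _ hker j
    have h' : (1 - Q) * (E j * P) = 0 := this
    rw [sub_mul, one_mul, sub_eq_zero] at h'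
    exact h'.symm
  have hEQ : ∀ j, P * (E j)ᴴ * Q = P * (E j)ᴴ := by
    intro j
    have := congrArg conjTranspose (hQE j)
    simpa only [conjTranspose_mul, hQherm, hP2, mul_assoc] using this
  have hSTTS : S * (T * T) * S = Q := by
    calc S * (T * T) * S = (S * T) * (T * S) := by simp only [mul_assoc]
    _ = Q * Q := by rw [hcomm]
    _ = T * S * T * S := by rw [hQdef, ← mul_assoc]
    _ = Q := by rw [hTST]
  have step1 : ∀ a : I, ∑ b, (P * (E a)ᴴ * S) * (E b * P * (E b)ᴴ) * (S * (E a * P))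
      = P * (E a)ᴴ * E a * P := by
    intro a
    rw [← Finset.sum_mul, ← Finset.mul_sum, ← hTsq]
    calc (P * (E a)ᴴ * S) * (T * T) * (S * (E a * P))
        = P * (E a)ᴴ * (S * (T * T) * S) * (E a * P) := by
          simp only [mul_assoc]
      _ = P * (E a)ᴴ * Q * (E a * P) := by rw [hSTTS]
      _ = P * (E a)ᴴ * (E a * P) := by rw [hEQ]
      _ = P * (E a)ᴴ * E a * P := by simp only [mul_assoc]
  have final : ∑ a, P * (E a)ᴴ * E a * P = P := by
    have : ∀ a : I, P * (E a)ᴴ * E a * P = P * ((E a)ᴴ * E a) * P := by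
      intro a; simp only [mul_assoc]
    rw [Finset.sum_congr rfl fun a _ => this a, ← Finset.sum_mul, ← Finset.mul_sum, hTP,
      mul_one, hP1]
  constructor
  · rw [Finset.sum_comm]
    have expand : ∀ j i : I, (P * (E i)ᴴ * S * E j * P)ᴴ * (P * (E i)ᴴ * S * E j * P)
        = (P * (E j)ᴴ * S) * (E i * P * (E i)ᴴ) * (S * (E j * P)) := by
      intro j i
      simp only [conjTranspose_mul, hP2, hSh, conjTranspose_conjTranspose, mul_assoc, hPP]
    calc ∑ j, ∑ i, (P * (E i)ᴴ * S * E j * P)ᴴ * (P * (E i)ᴴ * S * E j * P)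
        = ∑ j, ∑ i, (P * (E j)ᴴ * S) * (E i * P * (E i)ᴴ) * (S * (E j * P)) :=
          Finset.sum_congr rfl fun j _ => Finset.sum_congr rfl fun i _ => expand j i
      _ = ∑ j, P * (E j)ᴴ * E j * P := Finset.sum_congr rfl fun j _ => step1 j
      _ = P := final
  · have expand : ∀ i j : I, (P * (E i)ᴴ * S * E j * P) * (P * (E i)ᴴ * S * E j * P)ᴴ
        = (P * (E i)ᴴ * S) * (E j * P * (E j)ᴴ) * (S * (E i * P)) := by
      intro i j
      simp only [conjTranspose_mul, hP2, hSh, conjTranspose_conjTranspose, mul_assoc, hPP]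
    calc ∑ i, ∑ j, (P * (E i)ᴴ * S * E j * P) * (P * (E i)ᴴ * S * E j * P)ᴴ
        = ∑ i, ∑ j, (P * (E i)ᴴ * S) * (E j * P * (E j)ᴴ) * (S * (E i * P)) :=
          Finset.sum_congr rfl fun i _ => Finset.sum_congr rfl fun j _ => expand i j
      _ = ∑ i, P * (E i)ᴴ * E i * P := Finset.sum_congr rfl fun i _ => step1 i
      _ = P := final
end

section
/- Fidelity-loss identity underlying the AQEC conditions (Theorem 7, Eq. 17): Let A_{ij} (i, j ∈ I, I finite) be n×n complex matrices with ∑_{i,j} A_{ij}ᴴ A_{ij} = P, where P is an orthogonal projection. Given any complex numbers β_{ij}, set Δ_{ij} := A_{ij} − β_{ij} • P. Then for every unit vector ψ with P ψ = ψ: 1 − ∑_{i,j∈I} |⟨ψ, A_{ij} ψ⟩|² = ∑_{i,j∈I} ( ⟨ψ, Δ_{ij}ᴴ Δ_{ij} ψ⟩ − |⟨ψ, Δ_{ij} ψ⟩|² ). In particular, with A_{ij} = P E_iᴴ E(P)^{-1/2} E_j P the Kraus operators of the transpose channel composed with a TP noise channel, the fidelity loss of the transpose channel on the code equals the maximum of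 the right-hand side over pure code states. -/
open Matrix

/-- Fidelity-loss identity underlying the AQEC conditions (Theorem 7, Eq. 17): if
`∑_{ij} A_{ij}ᴴ A_{ij} = P` for an orthogonal projection `P`, and `Δ_{ij} := A_{ij} − β_{ij} • P`,
then for every pure code state `ψ`,
`1 − ∑_{ij} |⟨ψ, A_{ij} ψ⟩|² = ∑_{ij} (⟨ψ, Δ_{ij}ᴴ Δ_{ij} ψ⟩ − |⟨ψ, Δ_{ij} ψ⟩|²)`. -/
theorem AQEC_fidelity_loss_identity
    {n : ℕ} {I : Type*} [Fintype I]
    (A : I → I → Matrix (Fin n) (Fin n) ℂ) (β : I → I → ℂ)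
    (Δ : I → I → Matrix (Fin n) (Fin n) ℂ)
    (P : Matrix (Fin n) (Fin n) ℂ)
    (hP1 : P * P = P) (hP2 : Pᴴ = P)
    (hATP : ∑ i, ∑ j, (A i j)ᴴ * A i j = P)
    (hΔ : ∀ i j, Δ i j = A i j - β i j • P) :
    ∀ ψ : Fin n → ℂ, star ψ ⬝ᵥ ψ = 1 → P *ᵥ ψ = ψ →
      1 - ∑ i, ∑ j, ‖star ψ ⬝ᵥ (A i j *ᵥ ψ)‖ ^ 2
        = ∑ i, ∑ j, ((star ψ ⬝ᵥ (((Δ i j)ᴴ * Δ i j) *ᵥ ψ)).re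
            - ‖star ψ ⬝ᵥ (Δ i j *ᵥ ψ)‖ ^ 2) := by
  intro ψ hψ hPψ
  have hdot : ∀ M : Matrix (Fin n) (Fin n) ℂ,
      star ψ ⬝ᵥ ((Mᴴ * M) *ᵥ ψ) = star (M *ᵥ ψ) ⬝ᵥ (M *ᵥ ψ) := by
    intro M
    rw [star_mulVec, ← dotProduct_mulVec, mulVec_mulVec]
  have hΔψ : ∀ i j, Δ i j *ᵥ ψ = A i j *ᵥ ψ - β i j • ψ := by
    intro i j
    rw [hΔ, sub_mulVec, smul_mulVec, hPψ]
  have hconj : ∀ u : Fin n → ℂ, star u ⬝ᵥ ψ = star (star ψ ⬝ᵥ u) := by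
    intro u; simp [dotProduct, mul_comm]
  have key : ∀ i j,
      (star ψ ⬝ᵥ (((Δ i j)ᴴ * Δ i j) *ᵥ ψ)).re
        - ‖star ψ ⬝ᵥ (Δ i j *ᵥ ψ)‖ ^ 2
      = (star ψ ⬝ᵥ (((A i j)ᴴ * A i j) *ᵥ ψ)).re
        - ‖star ψ ⬝ᵥ (A i j *ᵥ ψ)‖ ^ 2 := by
    intro i j
    set u := A i j *ᵥ ψ with hu
    set b := β i j with hb
    set a := star ψ ⬝ᵥ u with ha
    have h1 : star ψ ⬝ᵥ (Δ i j *ᵥ ψ) = a - b := by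
      rw [hΔψ, dotProduct_sub, dotProduct_smul, hψ, smul_eq_mul, mul_one]
    have h2 : star ψ ⬝ᵥ (((Δ i j)ᴴ * Δ i j) *ᵥ ψ)
        = star u ⬝ᵥ u - star b * a - b * star a + b * star b := by
      rw [hdot, hΔψ i j, star_sub, star_smul, sub_dotProduct, dotProduct_sub,
        dotProduct_sub, smul_dotProduct, smul_dotProduct, dotProduct_smul,
        dotProduct_smul, hψ, hconj u, ← ha]
      simp [smul_eq_mul]
      ring
    rw [hdot (A i j), h1, h2, Complex.sq_norm, Complex.sq_norm,
      Complex.normSq_sub]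
    have hre : (star b * a).re + (b * star a).re = 2 * (a * (starRingEnd ℂ) b).re := by
      simp [Complex.star_def, Complex.mul_re, Complex.conj_re, Complex.conj_im]
      ring
    simp only [Complex.add_re, Complex.sub_re, Complex.normSq_apply]
    have hbb : (b * star b).re = Complex.normSq b := by
      simp [Complex.normSq_apply, Complex.star_def, Complex.mul_re]
    have haa : Complex.normSq a = a.re * a.re + a.im * a.im := by
      simp [Complex.normSq_apply]
    rw [← hu]
    linarith [hre, hbb, haa, Complex.normSq_apply b]
  calc 1 - ∑ i, ∑ j, ‖star ψ ⬝ᵥ (A i j *ᵥ ψ)‖ ^ 2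
      = ∑ i, ∑ j, ((star ψ ⬝ᵥ (((A i j)ᴴ * A i j) *ᵥ ψ)).re
          - ‖star ψ ⬝ᵥ (A i j *ᵥ ψ)‖ ^ 2) := by
        have hsum : ∑ i, ∑ j, (star ψ ⬝ᵥ (((A i j)ᴴ * A i j) *ᵥ ψ)).re = 1 := by
          let F : Matrix (Fin n) (Fin n) ℂ →+ ℂ :=
            { toFun := fun M => star ψ ⬝ᵥ (M *ᵥ ψ)
              map_zero' := by simp
              map_add' := fun M N => by simp [add_mulVec, dotProduct_add] }
          have : ∑ i, ∑ j, star ψ ⬝ᵥ (((A i j)ᴴ * A i j) *ᵥ ψ)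
              = star ψ ⬝ᵥ (P *ᵥ ψ) := by
            rw [← hATP]
            calc ∑ i, ∑ j, F ((A i j)ᴴ * A i j)
                = F (∑ i, ∑ j, (A i j)ᴴ * A i j) := by
                  rw [map_sum]
                  exact Finset.sum_congr rfl fun i _ => (map_sum F _ _).symm
              _ = _ := rfl
          have h1 : star ψ ⬝ᵥ (P *ᵥ ψ) = 1 := by rw [hPψ, hψ]
          calc ∑ i, ∑ j, (star ψ ⬝ᵥ (((A i j)ᴴ * A i j) *ᵥ ψ)).re
              = (∑ i, ∑ j, star ψ ⬝ᵥ (((A i j)ᴴ * A i j) *ᵥ ψ)).re := by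
                simp [Complex.re_sum]
            _ = 1 := by rw [this, h1]; rfl
        simp only [Finset.sum_sub_distrib]
        rw [hsum]
    _ = ∑ i, ∑ j, ((star ψ ⬝ᵥ (((Δ i j)ᴴ * Δ i j) *ᵥ ψ)).re
          - ‖star ψ ⬝ᵥ (Δ i j *ᵥ ψ)‖ ^ 2) := by
        exact Finset.sum_congr rfl fun i _ => Finset.sum_congr rfl fun j _ => (key i j).symm
end

section
/- Sufficient AQEC condition via the operator Δ_sum (Corollary 8): Let A_{ij} (i, j ∈ I, I finite) be n×n complex matrices with ∑_{i,j} A_{ij}ᴴ A_{ij} = P, where P is an orthogonal projection, let β_{ij} be complex numbers, and set Δ_{ij} := A_{ij} − β_{ij} • P and Δ_sum := ∑_{i,j} Δ_{ij}ᴴ Δ_{ij}. Then for every unit vector ψ with P ψ = ψ: 1 − ∑_{i,j∈I} |⟨ψ, A_{ij} ψ⟩|² ≤ ⟨ψ, Δ_sum ψ⟩. Consequently, if ε ≥ 0 and ε • 1 − Δ_sum is positive semidefinite (i.e., ‖Δ_sum‖ ≤ ε), then 1 − ∑_{i,j} |⟨ψ, A_{ij} ψ⟩|² ≤ ε for every pure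 code state ψ, so the code is ε-correctable using the map with Kraus operators {A_{ij}}. -/
open Matrix
open scoped ComplexOrder

lemma aux_dot_conjT {n : ℕ} (M : Matrix (Fin n) (Fin n) ℂ) (ψ : Fin n → ℂ) :
    star ψ ⬝ᵥ ((Mᴴ * M) *ᵥ ψ) = star (M *ᵥ ψ) ⬝ᵥ (M *ᵥ ψ) := by
  rw [← Matrix.mulVec_mulVec, Matrix.dotProduct_mulVec, ← Matrix.star_mulVec]

lemma aux_ineq {n : ℕ} (v ψ : Fin n → ℂ) (hψ : star ψ ⬝ᵥ ψ = 1) (b : ℂ) :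
    (star v ⬝ᵥ v).re - ‖star ψ ⬝ᵥ v‖ ^ 2
      ≤ (star (v - b • ψ) ⬝ᵥ (v - b • ψ)).re := by
  have hc : star v ⬝ᵥ ψ = starRingEnd ℂ (star ψ ⬝ᵥ v) := by
    rw [Matrix.star_dotProduct]; rfl
  have expand : star (v - b • ψ) ⬝ᵥ (v - b • ψ)
      = star v ⬝ᵥ v - b * starRingEnd ℂ (star ψ ⬝ᵥ v)
        - starRingEnd ℂ b * (star ψ ⬝ᵥ v) + starRingEnd ℂ b * b := by
    simp [star_sub, star_smul, sub_dotProduct, dotProduct_sub, smul_dotProduct,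
      dotProduct_smul, hψ, hc, smul_eq_mul]
    ring
  rw [expand, Complex.sq_norm]
  set a := star ψ ⬝ᵥ v with ha
  simp only [Complex.sub_re, Complex.add_re, Complex.mul_re, Complex.conj_re,
    Complex.conj_im, Complex.normSq_apply]
  nlinarith [sq_nonneg (b.re - a.re), sq_nonneg (b.im - a.im)]

lemma aux_dot_sum {n : ℕ} {κ : Type*} (s : Finset κ) (M : κ → Matrix (Fin n) (Fin n) ℂ)
    (ψ : Fin n → ℂ) :
    star ψ ⬝ᵥ ((∑ x ∈ s, M x) *ᵥ ψ) = ∑ x ∈ s, star ψ ⬝ᵥ (M x *ᵥ ψ) := by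
  induction s using Finset.cons_induction with
  | empty => simp
  | cons a s ha ih => simp [Matrix.add_mulVec, dotProduct_add, ih, Finset.sum_cons]

/-- Sufficient AQEC condition via the operator `Δ_sum` (Corollary 8): if
`∑_{ij} A_{ij}ᴴ A_{ij} = P` and `Δ_{ij} := A_{ij} − β_{ij} • P`, with
`Δ_sum := ∑_{ij} Δ_{ij}ᴴ Δ_{ij}`, then for every pure code state `ψ`,
`1 − ∑_{ij} |⟨ψ, A_{ij} ψ⟩|² ≤ ⟨ψ, Δ_sum ψ⟩`; consequently, if `ε ≥ 0` and
`ε • 1 − Δ_sum` is positive semidefinite (`‖Δ_sum‖ ≤ ε`), then the fidelity loss is at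
most `ε` on every pure code state, i.e. the code is `ε`-correctable. -/
theorem AQEC_sufficient_condition_Delta_sum
    {n : ℕ} {I : Type*} [Fintype I]
    (A : I → I → Matrix (Fin n) (Fin n) ℂ) (β : I → I → ℂ)
    (Δ : I → I → Matrix (Fin n) (Fin n) ℂ)
    (P Δsum : Matrix (Fin n) (Fin n) ℂ)
    (hP1 : P * P = P) (hP2 : Pᴴ = P)
    (hATP : ∑ i, ∑ j, (A i j)ᴴ * A i j = P)
    (hΔ : ∀ i j, Δ i j = A i j - β i j • P)
    (hΔsum : Δsum = ∑ i, ∑ j, (Δ i j)ᴴ * Δ i j) :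
    (∀ ψ : Fin n → ℂ, star ψ ⬝ᵥ ψ = 1 → P *ᵥ ψ = ψ →
      1 - ∑ i, ∑ j, ‖star ψ ⬝ᵥ (A i j *ᵥ ψ)‖ ^ 2
        ≤ (star ψ ⬝ᵥ (Δsum *ᵥ ψ)).re) ∧
    (∀ ε : ℝ, 0 ≤ ε → ((ε : ℂ) • (1 : Matrix (Fin n) (Fin n) ℂ) - Δsum).PosSemidef →
      ∀ ψ : Fin n → ℂ, star ψ ⬝ᵥ ψ = 1 → P *ᵥ ψ = ψ →
        1 - ∑ i, ∑ j, ‖star ψ ⬝ᵥ (A i j *ᵥ ψ)‖ ^ 2 ≤ ε) := by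
  have key : ∀ ψ : Fin n → ℂ, star ψ ⬝ᵥ ψ = 1 → P *ᵥ ψ = ψ →
      1 - ∑ i, ∑ j, ‖star ψ ⬝ᵥ (A i j *ᵥ ψ)‖ ^ 2
        ≤ (star ψ ⬝ᵥ (Δsum *ᵥ ψ)).re := by
    intro ψ hψ hPψ
    have hsum1 : ∑ i, ∑ j, (star ψ ⬝ᵥ (((A i j)ᴴ * A i j) *ᵥ ψ)).re = 1 := by
      have h : ∑ i, ∑ j, star ψ ⬝ᵥ (((A i j)ᴴ * A i j) *ᵥ ψ) = 1 := by
        calc ∑ i, ∑ j, star ψ ⬝ᵥ (((A i j)ᴴ * A i j) *ᵥ ψ)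
            = star ψ ⬝ᵥ ((∑ i, ∑ j, (A i j)ᴴ * A i j) *ᵥ ψ) := by
              simp [aux_dot_sum]
          _ = 1 := by rw [hATP, hPψ, hψ]
      have : (∑ i, ∑ j, star ψ ⬝ᵥ (((A i j)ᴴ * A i j) *ᵥ ψ)).re = 1 := by
        rw [h]; simp
      simpa [Complex.re_sum] using this
    have hΔψ : ∀ i j, Δ i j *ᵥ ψ = A i j *ᵥ ψ - β i j • ψ := by
      intro i j
      rw [hΔ]
      rw [Matrix.sub_mulVec, Matrix.smul_mulVec, hPψ]
    have hterm : ∀ i j, (star ψ ⬝ᵥ (((A i j)ᴴ * A i j) *ᵥ ψ)).re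
        - ‖star ψ ⬝ᵥ (A i j *ᵥ ψ)‖ ^ 2
        ≤ (star ψ ⬝ᵥ (((Δ i j)ᴴ * Δ i j) *ᵥ ψ)).re := by
      intro i j
      rw [aux_dot_conjT, aux_dot_conjT, hΔψ]
      exact aux_ineq (A i j *ᵥ ψ) ψ hψ (β i j)
    have hre : (star ψ ⬝ᵥ (Δsum *ᵥ ψ)).re
        = ∑ i, ∑ j, (star ψ ⬝ᵥ (((Δ i j)ᴴ * Δ i j) *ᵥ ψ)).re := by
      rw [hΔsum]
      simp [aux_dot_sum, Complex.re_sum]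
    rw [hre]
    calc 1 - ∑ i, ∑ j, ‖star ψ ⬝ᵥ (A i j *ᵥ ψ)‖ ^ 2
        = ∑ i, ∑ j, ((star ψ ⬝ᵥ (((A i j)ᴴ * A i j) *ᵥ ψ)).re
            - ‖star ψ ⬝ᵥ (A i j *ᵥ ψ)‖ ^ 2) := by
          rw [← hsum1, ← Finset.sum_sub_distrib]
          exact Finset.sum_congr rfl fun i _ => (Finset.sum_sub_distrib _ _).symm
      _ ≤ _ := Finset.sum_le_sum fun i _ => Finset.sum_le_sum fun j _ => hterm i j
  refine ⟨key, ?_⟩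
  intro ε hε hpsd ψ hψ hPψ
  have h2 := hpsd.dotProduct_mulVec_nonneg ψ
  have hval : star ψ ⬝ᵥ (((ε : ℂ) • (1 : Matrix (Fin n) (Fin n) ℂ) - Δsum) *ᵥ ψ)
      = (ε : ℂ) - star ψ ⬝ᵥ (Δsum *ᵥ ψ) := by
    rw [Matrix.sub_mulVec, dotProduct_sub, Matrix.smul_mulVec, Matrix.one_mulVec,
      dotProduct_smul, hψ, smul_eq_mul, mul_one]
  rw [hval] at h2
  have hre := (Complex.le_def.mp h2).1
  simp only [Complex.zero_re, Complex.sub_re, Complex.ofReal_re] at hre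
  linarith [key ψ hψ hPψ]
end

section
/- Worst-case fidelity of a unital CPTP qubit channel (Section V): Let {K_j}_{j∈J} be a finite Kraus family of 2×2 complex matrices with ∑_j K_jᴴ K_j = 1 and ∑_j K_j K_jᴴ = 1, defining the unital, trace-preserving channel Φ(ρ) = ∑_j K_j ρ K_jᴴ. Define the real symmetric 3×3 matrix N by N_{ab} := (1/4) · Re( tr(σ_a Φ(σ_b)) + tr(σ_b Φ(σ_a)) ) for a, b ∈ {x, y, z}, and let t_min be the smallest eigenvalue of N. Then (1/2)·(1 + t_min) is the minimum of ⟨ψ, Φ(ψψᴴ) ψ⟩ over all unit vectors ψ ∈ ℂ²: it is a lower bound for all unit ψ, and it is attained by some unit vector ψ. Equivalently, the worst-case fidelity loss of Φ is η_Φ = (1 − t_min)/2. -/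
open Matrix

/-- The Pauli matrices `σ_x, σ_y, σ_z`. -/
def pauli : Fin 3 → Matrix (Fin 2) (Fin 2) ℂ :=
  ![!![0, 1; 1, 0], !![0, -Complex.I; Complex.I, 0], !![1, 0; 0, -1]]

lemma pauli_decomp (ψ : Fin 2 → ℂ) :
    vecMulVec ψ (star ψ) = (1/2 : ℂ) • ((star ψ ⬝ᵥ ψ) • (1 : Matrix (Fin 2) (Fin 2) ℂ)
      + ∑ a : Fin 3, (star ψ ⬝ᵥ (pauli a *ᵥ ψ)) • pauli a) := by
  ext i j
  fin_cases i <;> fin_cases j <;>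
    (simp [pauli, vecMulVec, dotProduct, mulVec, Fin.sum_univ_three, Fin.sum_univ_two,
      Matrix.one_apply, Matrix.add_apply, Matrix.smul_apply]
     try ring_nf
     try simp [Complex.I_sq]
     try ring)

lemma pauli_dot_real (ψ : Fin 2 → ℂ) (a : Fin 3) :
    star ψ ⬝ᵥ (pauli a *ᵥ ψ) = ((star ψ ⬝ᵥ (pauli a *ᵥ ψ)).re : ℂ) := by
  fin_cases a <;>
    (apply Complex.ext <;>
      simp [pauli, dotProduct, mulVec, Fin.sum_univ_two] <;> try ring)

lemma pauli_dot_sq_sum (ψ : Fin 2 → ℂ) :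
    ∑ a : Fin 3, (star ψ ⬝ᵥ (pauli a *ᵥ ψ))^2 = (star ψ ⬝ᵥ ψ)^2 := by
  simp [pauli, dotProduct, mulVec, Fin.sum_univ_three, Fin.sum_univ_two]
  ring_nf
  simp [Complex.I_sq]
  try ring

lemma dot_eq_trace (A : Matrix (Fin 2) (Fin 2) ℂ) (ψ : Fin 2 → ℂ) :
    star ψ ⬝ᵥ (A *ᵥ ψ) = trace (A * vecMulVec ψ (star ψ)) := by
  simp [trace, mul_apply, vecMulVec, dotProduct, mulVec, Fin.sum_univ_two, diag]
  ring

lemma trace_pauli (a : Fin 3) : trace (pauli a) = 0 := by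
  fin_cases a <;> simp [pauli, trace, Fin.sum_univ_two]

lemma bloch_exists (v : Fin 3 → ℝ) (hv : ∑ a, v a ^ 2 = 1) :
    ∃ ψ : Fin 2 → ℂ, star ψ ⬝ᵥ ψ = 1 ∧ ∀ a, star ψ ⬝ᵥ (pauli a *ᵥ ψ) = (v a : ℂ) := by
  have hv3 : v 0 ^ 2 + v 1 ^ 2 + v 2 ^ 2 = 1 := by
    simpa [Fin.sum_univ_three] using hv
  by_cases h2 : v 2 = -1
  · have h0 : v 0 = 0 := by nlinarith
    have h1 : v 1 = 0 := by nlinarith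
    refine ⟨![0, 1], by simp [dotProduct, Fin.sum_univ_two], ?_⟩
    intro a
    fin_cases a <;> simp [pauli, dotProduct, mulVec, Fin.sum_univ_two, h0, h1, h2]
  · have hpos : 0 < 1 + v 2 := by
      rcases lt_or_eq_of_le (by nlinarith : -1 ≤ v 2) with h | h
      · linarith
      · exact absurd h.symm h2
    set r : ℝ := Real.sqrt ((1 + v 2) / 2) with hrdef
    have hr : 0 < r := Real.sqrt_pos.mpr (by linarith)
    have hr2 : r ^ 2 = (1 + v 2) / 2 := Real.sq_sqrt (by linarith)
    have hrne : r ≠ 0 := hr.ne'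
    refine ⟨![(r : ℂ), ⟨v 0 / (2 * r), v 1 / (2 * r)⟩], ?_, ?_⟩
    · simp [dotProduct, Fin.sum_univ_two, Complex.ext_iff, Complex.mul_re, Complex.mul_im]
      constructor
      · field_simp
        linear_combination (2*(2*r^2 - 1 + v 2)) * hr2 + hv3
      · field_simp
        try ring
    · intro a
      fin_cases a
      · simp [pauli, dotProduct, mulVec, Fin.sum_univ_two, Complex.ext_iff,
          Complex.mul_re, Complex.mul_im]
        constructor <;> (field_simp; try ring)
      · simp [pauli, dotProduct, mulVec, Fin.sum_univ_two, Complex.ext_iff,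
          Complex.mul_re, Complex.mul_im]
        constructor <;> (field_simp; try ring)
      · simp [pauli, dotProduct, mulVec, Fin.sum_univ_two, Complex.ext_iff,
          Complex.mul_re, Complex.mul_im]
        constructor
        · field_simp
          linear_combination (-1) * hv3 + (2*(4*r^2 - 1)*v 2 - 2*(8*r^4 + 2*r^2 - 1) - 8*r^2*(v 2 - 2*r^2 - 1)) * hr2
        · field_simp
          try ring

lemma rayleigh_ge {n : ℕ} {N : Matrix (Fin n) (Fin n) ℝ} (hsym : N.IsHermitian) {tmin : ℝ}
    (hle : ∀ t : ℝ, (∃ w : Fin n → ℝ, w ≠ 0 ∧ N *ᵥ w = t • w) → tmin ≤ t)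
    (v : Fin n → ℝ) (hv : ∑ a, v a ^ 2 = 1) : tmin ≤ v ⬝ᵥ (N *ᵥ v) := by
  classical
  set B := hsym.eigenvectorBasis with hB
  set lam := hsym.eigenvalues with hlam
  have hev : ∀ i, tmin ≤ lam i := by
    intro i
    apply hle
    refine ⟨(WithLp.equiv 2 _) (B i), ?_, hsym.mulVec_eigenvectorBasis i⟩
    intro h0
    have hz : B i = 0 := by
      apply (WithLp.equiv 2 (Fin n → ℝ)).injective
      rw [h0]
      simp
    have hn := B.orthonormal.1 i
    rw [hz] at hn
    simp at hn
  set v' : EuclideanSpace ℝ (Fin n) := (WithLp.equiv 2 _).symm v with hv'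
  set c : Fin n → ℝ := fun i => B.repr v' i with hc
  have hcsum : ∑ i, c i ^ 2 = 1 := by
    have h2 := B.repr.inner_map_map v' v'
    simp only [PiLp.inner_apply, RCLike.inner_apply, conj_trivial] at h2
    have h1 : ∑ i, c i ^ 2 = ∑ x, B.repr v' x * B.repr v' x := by
      simp [hc, sq]
    have h3 : ∑ x, v' x * v' x = ∑ a, v a ^ 2 := by
      simp [hv', sq]
    rw [h1, h2, h3, hv]
  set u : Fin n → (Fin n → ℝ) := fun i => (WithLp.equiv 2 _) (B i) with hu
  have hrepr : ∑ i, c i • u i = v := by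
    have h := congrArg (WithLp.ofLp) (B.sum_repr v')
    simp only [WithLp.ofLp_sum, WithLp.ofLp_smul] at h
    exact h
  have hcu : ∀ i, u i ⬝ᵥ v = c i := by
    intro i
    have h := B.repr_apply_apply v' i
    simp only [PiLp.inner_apply, RCLike.inner_apply, conj_trivial] at h
    show u i ⬝ᵥ v = B.repr v' i
    rw [h]
    exact Finset.sum_congr rfl fun x _ => mul_comm _ _
  have hNv : N *ᵥ v = ∑ i, (lam i * c i) • u i := by
    conv_lhs => rw [← hrepr]
    have hlin : N *ᵥ (∑ i, c i • u i) = ∑ i, c i • (N *ᵥ u i) := by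
      show N.mulVecLin _ = _
      rw [map_sum]
      simp only [Matrix.mulVecLin_apply, Matrix.mulVec_smul]
    rw [hlin]
    refine Finset.sum_congr rfl fun i _ => ?_
    rw [show N *ᵥ u i = lam i • u i from hsym.mulVec_eigenvectorBasis i, smul_smul, mul_comm]
  have hkey : v ⬝ᵥ (N *ᵥ v) = ∑ i, lam i * c i ^ 2 := by
    rw [hNv]
    have h4 : v ⬝ᵥ (∑ i, (lam i * c i) • u i) = ∑ i, (lam i * c i) * (v ⬝ᵥ u i) := by
      simp only [dotProduct, Finset.sum_apply, Pi.smul_apply, smul_eq_mul, Finset.mul_sum]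
      rw [Finset.sum_comm]
      exact Finset.sum_congr rfl fun i _ => Finset.sum_congr rfl fun a _ => by ring
    rw [h4]
    refine Finset.sum_congr rfl fun i _ => ?_
    rw [dotProduct_comm, hcu]
    ring
  calc tmin = ∑ i, tmin * c i ^ 2 := by rw [← Finset.mul_sum, hcsum, mul_one]
    _ ≤ ∑ i, lam i * c i ^ 2 :=
        Finset.sum_le_sum fun i _ => mul_le_mul_of_nonneg_right (hev i) (sq_nonneg _)
    _ = v ⬝ᵥ (N *ᵥ v) := hkey.symm

lemma fid_formula {J : Type*} [Fintype J] (K : J → Matrix (Fin 2) (Fin 2) ℂ)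
    (hKTP : ∑ j, (K j)ᴴ * K j = 1) (hKU : ∑ j, K j * (K j)ᴴ = 1)
    (ψ : Fin 2 → ℂ) (hψ : star ψ ⬝ᵥ ψ = 1) :
    star ψ ⬝ᵥ ((∑ j, K j * vecMulVec ψ (star ψ) * (K j)ᴴ) *ᵥ ψ)
      = 1/2 + (1/4) * ∑ a : Fin 3, ∑ b : Fin 3,
          (star ψ ⬝ᵥ (pauli a *ᵥ ψ)) * (star ψ ⬝ᵥ (pauli b *ᵥ ψ)) *
            trace ((∑ j, K j * pauli a * (K j)ᴴ) * pauli b) := by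
  classical
  set n : Fin 3 → ℂ := fun a => star ψ ⬝ᵥ (pauli a *ᵥ ψ) with hn
  set T : Fin 3 → Matrix (Fin 2) (Fin 2) ℂ := fun a => ∑ j, K j * pauli a * (K j)ᴴ with hT
  have traceT : ∀ a, trace (T a) = 0 := by
    intro a
    have h1 : trace (T a) = ∑ j, trace ((K j)ᴴ * K j * pauli a) := by
      rw [hT]
      simp only [trace_sum]
      exact Finset.sum_congr rfl fun j _ => trace_mul_cycle (K j) (pauli a) ((K j)ᴴ)
    rw [h1, ← trace_sum, ← Finset.sum_mul, hKTP, Matrix.one_mul, trace_pauli]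
  have step1 : ∑ j, K j * vecMulVec ψ (star ψ) * (K j)ᴴ
      = (1/2 : ℂ) • (1 : Matrix (Fin 2) (Fin 2) ℂ) + ∑ a, ((1/2 : ℂ) * n a) • T a := by
    have expand : ∀ j, K j * vecMulVec ψ (star ψ) * (K j)ᴴ
        = (1/2 : ℂ) • (K j * (K j)ᴴ) + ∑ a, ((1/2 : ℂ) * n a) • (K j * pauli a * (K j)ᴴ) := by
      intro j
      rw [pauli_decomp ψ, hψ, one_smul]
      simp only [Matrix.mul_add, Matrix.add_mul, Matrix.mul_smul, Matrix.smul_mul,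
        Matrix.mul_sum, Matrix.sum_mul, Matrix.mul_one, smul_smul, smul_add]
      rw [Finset.smul_sum]
      simp only [smul_smul]
      rfl
    simp only [expand]
    rw [Finset.sum_add_distrib, ← Finset.smul_sum, hKU, Finset.sum_comm]
    congr 1
    refine Finset.sum_congr rfl fun a _ => ?_
    rw [← Finset.smul_sum]
  have step3 : ∀ a, star ψ ⬝ᵥ (T a *ᵥ ψ)
      = (1/2 : ℂ) * ∑ b, n b * trace (T a * pauli b) := by
    intro a
    rw [dot_eq_trace, pauli_decomp ψ, hψ, one_smul]
    simp only [Matrix.mul_add, Matrix.mul_smul, Matrix.mul_sum, Matrix.mul_one,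
      trace_add, trace_smul, trace_sum, traceT, smul_eq_mul]
    rw [zero_add]
  rw [step1]
  rw [Matrix.add_mulVec, dotProduct_add, Matrix.smul_mulVec, dotProduct_smul,
    Matrix.one_mulVec, hψ]
  have step2 : star ψ ⬝ᵥ ((∑ a, ((1/2 : ℂ) * n a) • T a) *ᵥ ψ)
      = ∑ a, ((1/2 : ℂ) * n a) * (star ψ ⬝ᵥ (T a *ᵥ ψ)) := by
    have hmv : (∑ a, ((1/2 : ℂ) * n a) • T a) *ᵥ ψ = ∑ a, ((1/2 : ℂ) * n a) • (T a *ᵥ ψ) := by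
      funext i
      simp only [Matrix.mulVec, dotProduct, Finset.sum_apply, Matrix.smul_apply,
        Matrix.sum_apply, smul_eq_mul, Pi.smul_apply, Finset.sum_mul, Finset.mul_sum]
      rw [Finset.sum_comm]
      exact Finset.sum_congr rfl fun a _ => Finset.sum_congr rfl fun k _ => by ring
    rw [hmv]
    simp only [dotProduct, Finset.sum_apply, Pi.smul_apply, smul_eq_mul, Finset.mul_sum]
    rw [Finset.sum_comm]
    exact Finset.sum_congr rfl fun a _ => Finset.sum_congr rfl fun k _ => by ring
  rw [step2]
  simp only [step3]
  have hper : ∀ a : Fin 3, (1/2 * n a) * ((1/2 : ℂ) * ∑ b, n b * trace (T a * pauli b))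
      = ∑ b, (1/4 : ℂ) * (n a * n b * trace (T a * pauli b)) := by
    intro a
    rw [Finset.mul_sum, Finset.mul_sum]
    exact Finset.sum_congr rfl fun b _ => by ring
  simp only [hper, ← Finset.mul_sum]
  rw [smul_eq_mul, mul_one]

/-- Worst-case fidelity of a unital CPTP qubit channel (Section V): for a unital,
trace-preserving qubit channel `Φ(ρ) = ∑_j K_j ρ K_jᴴ`, with the real symmetric matrix
`N_{ab} = (1/4)·Re(tr(σ_a Φ(σ_b)) + tr(σ_b Φ(σ_a)))` and `t_min` its smallest eigenvalue,
the minimum of the squared fidelity `⟨ψ, Φ(ψψᴴ) ψ⟩` over unit vectors `ψ ∈ ℂ²` is exactly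
`(1/2)·(1 + t_min)`; equivalently, the worst-case fidelity loss is `(1 − t_min)/2`. -/
theorem worst_case_fidelity_unital_qubit
    {J : Type*} [Fintype J]
    (K : J → Matrix (Fin 2) (Fin 2) ℂ)
    (hKTP : ∑ j, (K j)ᴴ * K j = 1)
    (hKU : ∑ j, K j * (K j)ᴴ = 1)
    (N : Matrix (Fin 3) (Fin 3) ℝ) (tmin : ℝ)
    (hN : ∀ a b, N a b = (1 / 4) *
      ((Matrix.trace (pauli a * ∑ j, K j * pauli b * (K j)ᴴ)).re
        + (Matrix.trace (pauli b * ∑ j, K j * pauli a * (K j)ᴴ)).re))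
    (htmin : IsLeast {t : ℝ | ∃ v : Fin 3 → ℝ, v ≠ 0 ∧ N *ᵥ v = t • v} tmin) :
    IsLeast
      {r : ℝ | ∃ ψ : Fin 2 → ℂ, star ψ ⬝ᵥ ψ = 1 ∧
        r = (star ψ ⬝ᵥ ((∑ j, K j * vecMulVec ψ (star ψ) * (K j)ᴴ) *ᵥ ψ)).re}
      ((1 / 2) * (1 + tmin)) := by
  classical
  have hsym : N.IsHermitian := by
    ext a b
    simp only [conjTranspose_apply, hN, star_trivial]
    ring
  set t : Fin 3 → Fin 3 → ℂ := fun a b => trace ((∑ j, K j * pauli a * (K j)ᴴ) * pauli b) with ht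
  -- fidelity formula in terms of the Bloch vector
  have hfid : ∀ ψ : Fin 2 → ℂ, star ψ ⬝ᵥ ψ = 1 →
      (star ψ ⬝ᵥ ((∑ j, K j * vecMulVec ψ (star ψ) * (K j)ᴴ) *ᵥ ψ)).re
        = 1/2 * (1 + (fun a => (star ψ ⬝ᵥ (pauli a *ᵥ ψ)).re) ⬝ᵥ
            (N *ᵥ fun a => (star ψ ⬝ᵥ (pauli a *ᵥ ψ)).re)) := by
    intro ψ hψ
    set w : Fin 3 → ℝ := fun a => (star ψ ⬝ᵥ (pauli a *ᵥ ψ)).re with hw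
    rw [fid_formula K hKTP hKU ψ hψ]
    have hterm : ∀ a b : Fin 3,
        (star ψ ⬝ᵥ (pauli a *ᵥ ψ)) * (star ψ ⬝ᵥ (pauli b *ᵥ ψ)) * t a b
          = ((w a * w b : ℝ) : ℂ) * t a b := by
      intro a b
      rw [pauli_dot_real ψ a, pauli_dot_real ψ b]
      push_cast
      ring
    have hre : (1/2 + (1/4 : ℂ) * ∑ a : Fin 3, ∑ b : Fin 3,
        (star ψ ⬝ᵥ (pauli a *ᵥ ψ)) * (star ψ ⬝ᵥ (pauli b *ᵥ ψ)) * t a b).re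
          = 1/2 + (1/4) * ∑ a : Fin 3, ∑ b : Fin 3, w a * w b * (t a b).re := by
      rw [Complex.add_re]
      rw [show (1/4 : ℂ) = ((1/4 : ℝ) : ℂ) by norm_num, Complex.re_ofReal_mul]
      rw [show ((1/2 : ℂ)).re = (1/2 : ℝ) by norm_num]
      congr 1
      rw [Complex.re_sum]
      refine congrArg _ (Finset.sum_congr rfl fun a _ => ?_)
      rw [Complex.re_sum]
      refine Finset.sum_congr rfl fun b _ => ?_
      rw [hterm a b, Complex.re_ofReal_mul]
    rw [hre]
    have htr : ∀ a b : Fin 3,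
        trace (pauli a * (∑ j, K j * pauli b * (K j)ᴴ)) = t b a := fun a b =>
      trace_mul_comm _ _
    have hNq : w ⬝ᵥ (N *ᵥ w) = (1/2) * ∑ a : Fin 3, ∑ b : Fin 3, w a * w b * (t a b).re := by
      have swap : ∑ a : Fin 3, ∑ b : Fin 3, w a * w b * (t b a).re
          = ∑ a : Fin 3, ∑ b : Fin 3, w a * w b * (t a b).re := by
        rw [Finset.sum_comm]
        exact Finset.sum_congr rfl fun a _ => Finset.sum_congr rfl fun b _ => by ring
      have hexp : w ⬝ᵥ (N *ᵥ w) = ∑ a : Fin 3, ∑ b : Fin 3, w a * (N a b * w b) := by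
        simp only [dotProduct, mulVec, Finset.mul_sum]
      rw [hexp]
      have hNab : ∀ a b : Fin 3, w a * (N a b * w b)
          = (1/4) * (w a * w b * (t b a).re) + (1/4) * (w a * w b * (t a b).re) := by
        intro a b
        rw [hN a b, htr a b, htr b a]
        ring
      simp only [hNab]
      rw [Finset.mul_sum]
      simp only [Finset.sum_add_distrib, Finset.mul_sum]
      rw [Finset.sum_comm (s := Finset.univ) (t := Finset.univ)
        (f := fun a b => (1/4 : ℝ) * (w a * w b * (t b a).re))]
      rw [← Finset.sum_add_distrib]
      refine Finset.sum_congr rfl fun a _ => ?_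
      rw [← Finset.sum_add_distrib]
      exact Finset.sum_congr rfl fun b _ => by ring
    rw [hNq]
    ring
  have hnorm : ∀ ψ : Fin 2 → ℂ, star ψ ⬝ᵥ ψ = 1 →
      ∑ a : Fin 3, ((star ψ ⬝ᵥ (pauli a *ᵥ ψ)).re)^2 = 1 := by
    intro ψ hψ
    have h := pauli_dot_sq_sum ψ
    rw [hψ, one_pow] at h
    have h2 : ((∑ a : Fin 3, ((star ψ ⬝ᵥ (pauli a *ᵥ ψ)).re)^2 : ℝ) : ℂ) = 1 := by
      push_cast
      rw [← h]
      exact Finset.sum_congr rfl fun a _ => by rw [← pauli_dot_real ψ a]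
    exact_mod_cast h2
  constructor
  · -- the minimum is attained
    obtain ⟨v, hv0, hveq⟩ := htmin.1
    have hvpos : 0 < ∑ a, v a ^ 2 := by
      obtain ⟨a, ha⟩ := Function.ne_iff.mp hv0
      exact Finset.sum_pos' (fun i _ => sq_nonneg _)
        ⟨a, Finset.mem_univ a, (sq_nonneg _).lt_of_ne fun h => ha (sq_eq_zero_iff.mp h.symm)⟩
    set s := Real.sqrt (∑ a, v a ^ 2) with hs
    have hspos : 0 < s := Real.sqrt_pos.mpr hvpos
    have hs2 : s^2 = ∑ a, v a ^ 2 := Real.sq_sqrt hvpos.le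
    set u : Fin 3 → ℝ := s⁻¹ • v with hu
    have hunorm : ∑ a, u a ^ 2 = 1 := by
      simp only [hu, Pi.smul_apply, smul_eq_mul, mul_pow, ← Finset.mul_sum]
      rw [← hs2]
      field_simp
    have huev : N *ᵥ u = tmin • u := by
      rw [hu, Matrix.mulVec_smul, hveq, smul_comm]
    have huq : u ⬝ᵥ (N *ᵥ u) = tmin := by
      rw [huev]
      have h5 : u ⬝ᵥ (tmin • u) = tmin * ∑ a, u a ^ 2 := by
        simp only [dotProduct, Pi.smul_apply, smul_eq_mul, Finset.mul_sum]
        exact Finset.sum_congr rfl fun a _ => by ring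
      rw [h5, hunorm, mul_one]
    obtain ⟨ψ, hψ1, hψ2⟩ := bloch_exists u hunorm
    refine ⟨ψ, hψ1, ?_⟩
    rw [hfid ψ hψ1]
    have hwu : (fun a => (star ψ ⬝ᵥ (pauli a *ᵥ ψ)).re) = u := by
      funext a
      rw [hψ2 a]
      simp
    rw [hwu, huq]
  · rintro r ⟨ψ, hψ1, rfl⟩
    rw [hfid ψ hψ1]
    have hray := rayleigh_ge hsym (fun tt htt => htmin.2 htt) _ (hnorm ψ hψ1)
    nlinarith [hray]
end
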